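/- arXiv:2104.05958 — 4 statements merged into one kernel-verified Lean document; each statement's English description precedes it below -/
import Mathlib

section
/- If T is a tree with maximum degree Δ, then the list star chromatic index of T satisfies ch'_star(T) ≤ ⌊3Δ/2⌋. -/
open SimpleGraph
open scoped Classical

/-- Two edges (as unordered pairs of vertices) are adjacent:
they are distinct and share an endpoint. -/
def EdgeAdj {V : Type*} (e₁ e₂ : Sym2 V) : Prop :=
  e₁ ≠ e₂ ∧ ∃ v, v ∈ e₁ ∧ v ∈ e₂

/-- `φ` is a star edge coloring of `G`: a proper edge coloring such that
no path of length four and no cycle of length four is bichromatic. -/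
def IsStarEdgeColoring {V : Type*} (G : SimpleGraph V) (φ : Sym2 V → ℕ) : Prop :=
  (∀ e₁ ∈ G.edgeSet, ∀ e₂ ∈ G.edgeSet, EdgeAdj e₁ e₂ → φ e₁ ≠ φ e₂) ∧
  (∀ (u v : V) (p : G.Walk u v), p.IsPath → p.length = 4 →
      ¬ ∃ c₁ c₂ : ℕ, ∀ e ∈ p.edges, φ e = c₁ ∨ φ e = c₂) ∧
  (∀ (u : V) (p : G.Walk u u), p.IsCycle → p.length = 4 →
      ¬ ∃ c₁ c₂ : ℕ, ∀ e ∈ p.edges, φ e = c₁ ∨ φ e = c₂)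

/-- `G` has a star edge coloring using colors `< k`. -/
def StarColorable {V : Type*} (G : SimpleGraph V) (k : ℕ) : Prop :=
  ∃ φ : Sym2 V → ℕ, (∀ e ∈ G.edgeSet, φ e < k) ∧ IsStarEdgeColoring G φ

/-- The star chromatic index of `G`. -/
noncomputable def starChromaticIndex {V : Type*} (G : SimpleGraph V) : ℕ :=
  sInf {k | StarColorable G k}

/-- `G` is star `k`-edge choosable. -/
def StarChoosable {V : Type*} (G : SimpleGraph V) (k : ℕ) : Prop :=
  ∀ L : Sym2 V → Finset ℕ, (∀ e ∈ G.edgeSet, k ≤ (L e).card) →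
    ∃ φ : Sym2 V → ℕ, (∀ e ∈ G.edgeSet, φ e ∈ L e) ∧ IsStarEdgeColoring G φ

/-- The list star chromatic index of `G`. -/
noncomputable def listStarChromaticIndex {V : Type*} (G : SimpleGraph V) : ℕ :=
  sInf {k | StarChoosable G k}

/-- The maximum Ore-degree `θ(G) = max_{xy ∈ E(G)} (d(x) + d(y))`. -/
noncomputable def oreDegree {V : Type*} (G : SimpleGraph V) [Fintype V] : ℕ :=
  sSup {n | ∃ x y, G.Adj x y ∧ n = G.degree x + G.degree y}

/-- `H = T ∪ C` is a generalized Halin graph with characteristic tree `T` and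
adjoint cycle `C`: `T` is a tree with `Δ(T) ≥ 3`, `C` is a cycle (a connected
`2`-regular subgraph on its support) passing exactly through the leaves of `T`,
the edges of `T` and `C` are disjoint, and `H` is their union. -/
def IsGenHalin {V : Type*} [Fintype V] (H T C : SimpleGraph V) : Prop :=
  T.IsTree ∧ 3 ≤ T.maxDegree ∧ H = T ⊔ C ∧ Disjoint T.edgeSet C.edgeSet ∧
  (∀ v, T.degree v = 1 ↔ C.degree v = 2) ∧
  (∀ v, C.degree v = 0 ∨ C.degree v = 2) ∧
  (∀ u v, C.degree u = 2 → C.degree v = 2 → C.Reachable u v)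

/-- A Halin graph: a generalized Halin graph whose characteristic tree has
no vertex of degree `2`. -/
def IsHalin {V : Type*} [Fintype V] (H T C : SimpleGraph V) : Prop :=
  IsGenHalin H T C ∧ ∀ v, T.degree v ≠ 2

/-- A complete Halin graph: all leaves of `T` are at the same distance
from the root. -/
def IsCompleteHalin {V : Type*} [Fintype V] (H T C : SimpleGraph V) : Prop :=
  IsHalin H T C ∧
    ∃ r, ∀ u v, T.degree u = 1 → T.degree v = 1 → T.dist r u = T.dist r v


namespace StarTreeProof
variable {V : Type*}




/-- Greedy choice of distinct colors from large lists avoiding a forbidden set. -/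
lemma exists_distinct_choice {α : Type*} (s : Finset α) (A : Finset ℕ) (Ls : α → Finset ℕ)
    (N : ℕ) (h1 : ∀ x ∈ s, N ≤ (Ls x).card) (h2 : A.card + s.card ≤ N) :
    ∃ c : α → ℕ, (∀ x ∈ s, c x ∈ Ls x ∧ c x ∉ A) ∧ Set.InjOn c s := by
  classical
  induction s using Finset.induction_on with
  | empty => exact ⟨fun _ => 0, by simp, by simp⟩
  | @insert x s hx ih =>
    obtain ⟨c, hc1, hc2⟩ := ih (fun y hy => h1 y (Finset.mem_insert_of_mem hy))
      (by rw [Finset.card_insert_of_notMem hx] at h2; omega)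
    have hcard : (A ∪ s.image c).card < (Ls x).card := by
      calc (A ∪ s.image c).card ≤ A.card + (s.image c).card := Finset.card_union_le _ _
        _ ≤ A.card + s.card := by
            have := Finset.card_image_le (s := s) (f := c); omega
        _ < N := by rw [Finset.card_insert_of_notMem hx] at h2; omega
        _ ≤ (Ls x).card := h1 x (Finset.mem_insert_self _ _)
    have hne : (Ls x \ (A ∪ s.image c)).Nonempty := by
      apply Finset.card_pos.mp
      have := Finset.le_card_sdiff (A ∪ s.image c) (Ls x)
      omega
    obtain ⟨cx, hcx⟩ := hne
    rw [Finset.mem_sdiff, Finset.mem_union, not_or] at hcx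
    obtain ⟨hcxL, hcxA, hcxIm⟩ := hcx
    refine ⟨Function.update c x cx, ?_, ?_⟩
    · intro y hy
      rcases Finset.mem_insert.mp hy with rfl | hy'
      · simp [Function.update_self, hcxL, hcxA]
      · have hyx : y ≠ x := by rintro rfl; exact hx hy'
        rw [Function.update_of_ne hyx]
        exact hc1 y hy'
    · intro y hy z hz hyz
      simp only [Finset.coe_insert, Set.mem_insert_iff, Finset.mem_coe] at hy hz
      rcases hy with rfl | hy <;> rcases hz with rfl | hz
      · rfl
      · rw [Function.update_self, Function.update_of_ne (by rintro rfl; exact hx hz)] at hyz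
        exact absurd (Finset.mem_image_of_mem c hz) (hyz ▸ hcxIm)
      · rw [Function.update_self, Function.update_of_ne (by rintro rfl; exact hx hy)] at hyz
        exact absurd (Finset.mem_image_of_mem c hy) (hyz.symm ▸ hcxIm)
      · rw [Function.update_of_ne (by rintro rfl; exact hx hy),
          Function.update_of_ne (by rintro rfl; exact hx hz)] at hyz
        exact hc2 hy hz hyz

/-- The orientation relation on indices: `Rel a b` means the vertex indexed `a`
must avoid the color of the vertex indexed `b`. -/
def Rel (a b : ℕ) : Prop := (a < b ∧ (a + b) % 2 = 1) ∨ (b < a ∧ (a + b) % 2 = 0)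

lemma rel_total {a b : ℕ} (h : a ≠ b) : Rel a b ∨ Rel b a := by
  unfold Rel; omega

lemma count_even (k : ℕ) : ((Finset.range k).filter (fun b => b % 2 = 0)).card = (k + 1) / 2 := by
  induction k with
  | zero => simp
  | succ k ih =>
    rw [Finset.range_add_one, Finset.filter_insert]
    by_cases h : k % 2 = 0
    · rw [if_pos h, Finset.card_insert_of_notMem (by simp)]
      omega
    · rw [if_neg h]
      omega

lemma count_odd (k : ℕ) : ((Finset.range k).filter (fun b => b % 2 = 1)).card = k / 2 := by
  induction k with
  | zero => simp
  | succ k ih =>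
    rw [Finset.range_add_one, Finset.filter_insert]
    by_cases h : k % 2 = 1
    · rw [if_pos h, Finset.card_insert_of_notMem (by simp)]
      omega
    · rw [if_neg h]
      omega

lemma count_mod (k r : ℕ) (hr : r < 2) :
    ((Finset.range k).filter (fun b => b % 2 = r)).card = (k + 1 - r) / 2 := by
  interval_cases r
  · simpa using count_even k
  · simpa using count_odd k

/-- Out-degree bound for the parity orientation: index `a` avoids at most
`k/2` (if `a` even) resp. `(k+1)/2 - 1` (if `a` odd) other indices. -/
lemma card_rel_le_aux (k a r' : ℕ) (ha : a < k) (hr : r' < 2) (hpar : a % 2 ≠ r') :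
    ((Finset.range k).filter (fun b => Rel a b)).card ≤
      (k + 1 - r') / 2 - (a + 2 - r') / 2 + (a + 1 - a % 2) / 2 := by
  classical
  have hsplit : (Finset.range k).filter (fun b => Rel a b) ⊆
      ((Finset.range k).filter (fun b => b % 2 = r') \
        (Finset.range (a + 1)).filter (fun b => b % 2 = r')) ∪
      ((Finset.range a).filter (fun b => b % 2 = a % 2)) := by
    intro b hb
    simp only [Finset.mem_filter, Finset.mem_range] at hb
    obtain ⟨hbk, hrel⟩ := hb
    simp only [Finset.mem_union, Finset.mem_sdiff, Finset.mem_filter, Finset.mem_range]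
    rcases hrel with ⟨hab, hpar2⟩ | ⟨hba, hpar2⟩
    · left
      exact ⟨⟨hbk, by omega⟩, by omega⟩
    · right
      exact ⟨hba, by omega⟩
  have h1 := Finset.card_le_card hsplit
  have h2 := Finset.card_union_le
    ((Finset.range k).filter (fun b => b % 2 = r') \
        (Finset.range (a + 1)).filter (fun b => b % 2 = r'))
    ((Finset.range a).filter (fun b => b % 2 = a % 2))
  have h3 : ((Finset.range k).filter (fun b => b % 2 = r') \
      (Finset.range (a + 1)).filter (fun b => b % 2 = r')).card =
      ((Finset.range k).filter (fun b => b % 2 = r')).card -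
      ((Finset.range (a + 1)).filter (fun b => b % 2 = r')).card := by
    apply Finset.card_sdiff_of_subset
    apply Finset.filter_subset_filter
    exact Finset.range_subset_range.mpr (by omega)
  have e1 := count_mod k r' hr
  have e2 := count_mod (a + 1) r' hr
  have e3 := count_mod a (a % 2) (by omega)
  omega

lemma card_rel_le (k a : ℕ) (ha : a < k) :
    ((Finset.range k).filter (fun b => Rel a b)).card ≤
      if a % 2 = 0 then k / 2 else (k + 1) / 2 - 1 := by
  by_cases ha2 : a % 2 = 0
  · have := card_rel_le_aux k a 1 ha (by omega) (by omega)
    rw [if_pos ha2]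
    omega
  · have := card_rel_le_aux k a 0 ha (by omega) (by omega)
    rw [if_neg ha2]
    omega

/-- Existence of an injective indexing placing a designated small subset at odd indices. -/
lemma exists_placement {α : Type*} [DecidableEq α] (s t : Finset α) (hts : t ⊆ s)
    (h : t.card ≤ s.card / 2) :
    ∃ g : α → ℕ, Set.InjOn g s ∧ (∀ x ∈ s, g x < s.card) ∧ (∀ x ∈ t, g x % 2 = 1) := by
  classical
  set odds := (Finset.range s.card).filter (fun b => b % 2 = 1) with hodds
  have hoc : odds.card = s.card / 2 := count_odd s.card
  obtain ⟨t', ht'sub, ht'card⟩ := Finset.exists_subset_card_eq (s := odds) (n := t.card) (by omega)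
  have hcard1 : Fintype.card t = Fintype.card t' := by
    rw [Fintype.card_coe, Fintype.card_coe, ht'card]
  have hcard2 : Fintype.card (s \ t : Finset α) =
      Fintype.card ((Finset.range s.card) \ t' : Finset ℕ) := by
    have h1 : (s \ t).card = s.card - t.card := Finset.card_sdiff_of_subset hts
    have h2 : ((Finset.range s.card) \ t').card = s.card - t.card := by
      rw [Finset.card_sdiff_of_subset (ht'sub.trans (Finset.filter_subset _ _)), Finset.card_range, ht'card]
    simp [h1, h2]
  let e₁ : t ≃ t' := Fintype.equivOfCardEq hcard1
  let e₂ : (s \ t : Finset α) ≃ ((Finset.range s.card) \ t' : Finset ℕ) :=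
    Fintype.equivOfCardEq hcard2
  let g : α → ℕ := fun x => if hx : x ∈ t then (e₁ ⟨x, hx⟩ : ℕ) else
    if hx' : x ∈ s \ t then (e₂ ⟨x, hx'⟩ : ℕ) else 0
  have hgt : ∀ x (hx : x ∈ t), g x = (e₁ ⟨x, hx⟩ : ℕ) := fun x hx => dif_pos hx
  have hgs : ∀ x (hx : x ∉ t) (hx' : x ∈ s \ t), g x = (e₂ ⟨x, hx'⟩ : ℕ) := by
    intro x hx hx'
    show dite _ _ _ = _
    rw [dif_neg hx, dif_pos hx']
  refine ⟨g, ?_, ?_, ?_⟩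
  · intro x hx y hy hxy
    simp only [Finset.mem_coe] at hx hy
    by_cases hxt : x ∈ t <;> by_cases hyt : y ∈ t
    · rw [hgt x hxt, hgt y hyt] at hxy
      have := e₁.injective (Subtype.ext hxy)
      exact congrArg Subtype.val this
    · rw [hgt x hxt, hgs y hyt (Finset.mem_sdiff.mpr ⟨hy, hyt⟩)] at hxy
      have h1 : (e₁ ⟨x, hxt⟩ : ℕ) ∈ t' := (e₁ ⟨x, hxt⟩).2
      have h2 : (e₂ ⟨y, Finset.mem_sdiff.mpr ⟨hy, hyt⟩⟩ : ℕ) ∈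
          (Finset.range s.card) \ t' := (e₂ _).2
      rw [hxy] at h1
      exact absurd h1 (Finset.mem_sdiff.mp h2).2
    · rw [hgs x hxt (Finset.mem_sdiff.mpr ⟨hx, hxt⟩), hgt y hyt] at hxy
      have h1 : (e₁ ⟨y, hyt⟩ : ℕ) ∈ t' := (e₁ ⟨y, hyt⟩).2
      have h2 : (e₂ ⟨x, Finset.mem_sdiff.mpr ⟨hx, hxt⟩⟩ : ℕ) ∈
          (Finset.range s.card) \ t' := (e₂ _).2
      rw [← hxy] at h1
      exact absurd h1 (Finset.mem_sdiff.mp h2).2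
    · rw [hgs x hxt (Finset.mem_sdiff.mpr ⟨hx, hxt⟩),
        hgs y hyt (Finset.mem_sdiff.mpr ⟨hy, hyt⟩)] at hxy
      have := e₂.injective (Subtype.ext hxy)
      simpa using congrArg Subtype.val this
  · intro x hx
    by_cases hxt : x ∈ t
    · rw [hgt x hxt]
      have h1 : (e₁ ⟨x, hxt⟩ : ℕ) ∈ t' := (e₁ ⟨x, hxt⟩).2
      have := ht'sub h1
      simp only [hodds, Finset.mem_filter, Finset.mem_range] at this
      exact this.1
    · rw [hgs x hxt (Finset.mem_sdiff.mpr ⟨hx, hxt⟩)]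
      have h2 := (e₂ ⟨x, Finset.mem_sdiff.mpr ⟨hx, hxt⟩⟩).2
      rw [Finset.mem_sdiff, Finset.mem_range] at h2
      exact h2.1
  · intro x hxt
    rw [hgt x hxt]
    have h1 : (e₁ ⟨x, hxt⟩ : ℕ) ∈ t' := (e₁ ⟨x, hxt⟩).2
    have := ht'sub h1
    simp only [hodds, Finset.mem_filter, Finset.mem_range] at this
    exact this.2




/-- A rooted-tree structure on a graph. -/
structure Rooted (T : SimpleGraph V) where
  root : V
  par : V → V
  dep : V → ℕ
  par_root : par root = root
  adj_par : ∀ v, v ≠ root → T.Adj v (par v)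
  dep_par : ∀ v, v ≠ root → dep (par v) + 1 = dep v
  dep_root : dep root = 0
  adj_or : ∀ v w, T.Adj v w → par v = w ∨ par w = v

namespace Rooted

variable {T : SimpleGraph V} (R : Rooted T)

lemma ne_root_of_par {w v : V} (hp : R.par w = v) (hne : v ≠ w) : w ≠ R.root := by
  rintro rfl
  rw [R.par_root] at hp
  exact hne (hp ▸ hp.symm ▸ rfl)

lemma dep_pos {v : V} (hv : v ≠ R.root) : 1 ≤ R.dep v := by
  have := R.dep_par v hv; omega

lemma root_of_dep_zero {v : V} (hv : R.dep v = 0) : v = R.root := by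
  by_contra h
  have := R.dep_pos h
  omega

lemma not_par_par {v w : V} (hv : v ≠ R.root) (hw : w ≠ R.root)
    (h1 : R.par w = v) (h2 : R.par v = w) : False := by
  have a1 := R.dep_par w hw
  have a2 := R.dep_par v hv
  rw [h1] at a1
  rw [h2] at a2
  omega

/-- The children of a vertex. -/
noncomputable def children [Fintype V] (v : V) : Finset V :=
  Finset.univ.filter (fun w => R.par w = v ∧ w ≠ R.root)

lemma mem_children [Fintype V] {v w : V} :
    w ∈ R.children v ↔ R.par w = v ∧ w ≠ R.root := by
  simp [children]

lemma dep_of_mem_children [Fintype V] {v w : V} (h : w ∈ R.children v) :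
    R.dep w = R.dep v + 1 := by
  rw [mem_children] at h
  have := R.dep_par w h.2
  rw [h.1] at this
  omega

lemma adj_of_mem_children [Fintype V] {v w : V} (h : w ∈ R.children v) : T.Adj v w := by
  rw [mem_children] at h
  have := R.adj_par w h.2
  rw [h.1] at this
  exact this.symm

lemma par_not_mem_children [Fintype V] {v : V} (hv : v ≠ R.root) :
    R.par v ∉ R.children v := by
  rw [mem_children]
  rintro ⟨h1, h2⟩
  exact R.not_par_par hv h2 h1 rfl

lemma self_not_mem_children [Fintype V] {v : V} : v ∉ R.children v := by
  rw [mem_children]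
  rintro ⟨h1, h2⟩
  have := R.dep_par v h2
  rw [h1] at this
  omega

lemma neighborFinset_eq [Fintype V] (v : V) :
    T.neighborFinset v = R.children v ∪ (if v = R.root then ∅ else {R.par v}) := by
  ext w
  rw [mem_neighborFinset, Finset.mem_union, mem_children]
  constructor
  · intro hadj
    rcases R.adj_or v w hadj with h | h
    · right
      have hvr : v ≠ R.root := by
        rintro rfl
        rw [R.par_root] at h
        exact hadj.ne (h ▸ rfl)
      rw [if_neg hvr]
      simp [← h]
    · left
      refine ⟨h, ?_⟩
      rintro rfl
      rw [R.par_root] at h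
      exact hadj.ne h.symm
  · intro hw
    rcases hw with ⟨h1, h2⟩ | h
    · exact ((h1 ▸ R.adj_par w h2 :)).symm
    · by_cases hvr : v = R.root
      · rw [if_pos hvr] at h
        simp at h
      · rw [if_neg hvr] at h
        simp only [Finset.mem_singleton] at h
        exact h ▸ R.adj_par v hvr

lemma degree_eq [Fintype V] (v : V) :
    T.degree v = (R.children v).card + (if v = R.root then 0 else 1) := by
  rw [← card_neighborFinset_eq_degree, R.neighborFinset_eq v]
  by_cases hvr : v = R.root
  · rw [if_pos hvr, if_pos hvr]
    simp
  · rw [if_neg hvr, if_neg hvr]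
    rw [Finset.card_union_of_disjoint]
    · simp
    · simp only [Finset.disjoint_singleton_right]
      exact R.par_not_mem_children hvr

lemma parEdge_mem_edgeSet {w : V} (hw : w ≠ R.root) : s(R.par w, w) ∈ T.edgeSet := by
  rw [Sym2.eq_swap]
  exact R.adj_par w hw

lemma parEdge_injOn {w w' : V} (hw : w ≠ R.root) (hw' : w' ≠ R.root)
    (h : s(R.par w, w) = s(R.par w', w')) : w = w' := by
  rw [Sym2.eq_iff] at h
  rcases h with ⟨h1, h2⟩ | ⟨h1, h2⟩
  · exact h2
  · exfalso
    have a1 := R.dep_par w hw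
    have a2 := R.dep_par w' hw'
    rw [h1] at a1
    rw [← h2] at a2
    omega

end Rooted

/-- Every tree admits a rooted-tree structure. -/
lemma exists_rooted [Fintype V] {T : SimpleGraph V} (hT : T.IsTree) : Nonempty (Rooted T) := by
  classical
  obtain ⟨ρ⟩ := hT.isConnected.nonempty
  have hconn := hT.isConnected
  -- parent existence
  have hpar : ∀ v, v ≠ ρ → ∃ w, T.Adj v w ∧ T.dist ρ w + 1 = T.dist ρ v := by
    intro v hv
    have hd : T.dist ρ v ≠ 0 := by
      intro h0
      exact hv (hconn.dist_eq_zero_iff.mp h0).symm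
    obtain ⟨p, hp⟩ := hconn.exists_walk_length_eq_dist ρ v
    have hrl : p.reverse.length = T.dist ρ v := by rw [Walk.length_reverse, hp]
    cases hq : p.reverse with
    | nil => rw [hq] at hrl; simp at hrl; simp at hd
    | @cons _ w _ hadj q' =>
      refine ⟨w, hadj, ?_⟩
      have hlen : q'.length + 1 = T.dist ρ v := by
        rw [hq] at hrl
        simpa using hrl
      have hle : T.dist ρ w ≤ q'.length := by
        have := SimpleGraph.dist_le q'.reverse
        simpa using this
      have hge : T.dist ρ v ≤ T.dist ρ w + 1 := by
        obtain ⟨pw, hpw⟩ := hconn.exists_walk_length_eq_dist ρ w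
        have := SimpleGraph.dist_le (pw.concat hadj.symm)
        rw [Walk.length_concat, hpw] at this
        exact this
      omega
  set par : V → V := fun v => if h : v = ρ then ρ else Classical.choose (hpar v h) with hpardef
  have hpar1 : ∀ v, v ≠ ρ → T.Adj v (par v) ∧ T.dist ρ (par v) + 1 = T.dist ρ v := by
    intro v hv
    have : par v = Classical.choose (hpar v hv) := dif_neg hv
    rw [this]
    exact Classical.choose_spec (hpar v hv)
  -- the parent-edge map is a bijection onto the edge set
  have hcardV : 1 ≤ Fintype.card V := Fintype.card_pos_iff.mpr ⟨ρ⟩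
  have hinj : Set.InjOn (fun w => s(w, par w)) (Finset.univ.erase ρ) := by
    intro w hw w' hw' h
    simp only [Finset.coe_erase, Set.mem_diff, Finset.coe_univ] at hw hw'
    have hwr : w ≠ ρ := by simpa [Finset.mem_erase] using hw
    have hw'r : w' ≠ ρ := by simpa [Finset.mem_erase] using hw'
    simp only [Sym2.eq_iff] at h
    rcases h with ⟨h1, h2⟩ | ⟨h1, h2⟩
    · exact h1
    · exfalso
      have a1 := (hpar1 w hwr).2
      have a2 := (hpar1 w' hw'r).2
      rw [h2] at a1
      rw [← h1] at a2
      omega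
  have himsub : (Finset.univ.erase ρ).image (fun w => s(w, par w)) ⊆ T.edgeFinset := by
    intro e he
    rw [Finset.mem_image] at he
    obtain ⟨w, hw, rfl⟩ := he
    rw [mem_edgeFinset]
    exact (hpar1 w (Finset.mem_erase.mp hw).1).1
  have hcards : ((Finset.univ.erase ρ).image (fun w => s(w, par w))).card = T.edgeFinset.card := by
    rw [Finset.card_image_of_injOn hinj, Finset.card_erase_of_mem (Finset.mem_univ ρ),
      Finset.card_univ]
    have := hT.card_edgeFinset
    omega
  have himeq : (Finset.univ.erase ρ).image (fun w => s(w, par w)) = T.edgeFinset :=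
    Finset.eq_of_subset_of_card_le himsub (le_of_eq hcards.symm)
  refine ⟨⟨ρ, par, T.dist ρ, dif_pos rfl, fun v hv => (hpar1 v hv).1,
    fun v hv => (hpar1 v hv).2, by simp, ?_⟩⟩
  intro v w hadj
  have he : s(v, w) ∈ T.edgeFinset := by rw [mem_edgeFinset]; exact hadj
  rw [← himeq, Finset.mem_image] at he
  obtain ⟨x, hx, hxe⟩ := he
  rw [Sym2.eq_iff] at hxe
  rcases hxe with ⟨h1, h2⟩ | ⟨h1, h2⟩
  · left; rw [h1] at h2; exact h2
  · right; rw [h1] at h2; exact h2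




section Main

variable [Fintype V] {T : SimpleGraph V} (R : StarTreeProof.Rooted T)

/-- The set of colors appearing on edges at `par v` other than the edge to `v`. -/
noncomputable def Cp (col : V → ℕ) (v : V) : Finset ℕ :=
  ((R.children (R.par v)).erase v).image col ∪
    (if R.par v = R.root then ∅ else {col (R.par v)})

lemma mem_Cp_of_sibling {col : V → ℕ} {v u' : V} (h : u' ∈ R.children (R.par v))
    (hne : u' ≠ v) : col u' ∈ Cp R col v := by
  apply Finset.mem_union_left
  exact Finset.mem_image_of_mem col (Finset.mem_erase.mpr ⟨hne, h⟩)

lemma mem_Cp_par {col : V → ℕ} {v : V} (h : R.par v ≠ R.root) :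
    col (R.par v) ∈ Cp R col v := by
  apply Finset.mem_union_right
  rw [if_neg h]
  exact Finset.mem_singleton_self _

lemma card_Cp_le {col : V → ℕ} {v : V} (hv : v ≠ R.root) :
    (Cp R col v).card + 1 ≤ T.degree (R.par v) := by
  have hvmem : v ∈ R.children (R.par v) := R.mem_children.mpr ⟨rfl, hv⟩
  have h1 : ((R.children (R.par v)).erase v).card = (R.children (R.par v)).card - 1 :=
    Finset.card_erase_of_mem hvmem
  have h2 : (((R.children (R.par v)).erase v).image col).card ≤
      ((R.children (R.par v)).erase v).card := Finset.card_image_le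
  have h3 : (Cp R col v).card ≤ (((R.children (R.par v)).erase v).image col).card +
      (if R.par v = R.root then (0:ℕ) else 1) := by
    refine le_trans (Finset.card_union_le _ _) ?_
    gcongr
    split <;> simp
  have h4 := R.degree_eq (R.par v)
  have h5 : 1 ≤ (R.children (R.par v)).card := Finset.card_pos.mpr ⟨v, hvmem⟩
  by_cases hpr : R.par v = R.root
  · rw [if_pos hpr] at h3 h4
    omega
  · rw [if_neg hpr] at h3 h4
    omega

/-- The master invariant for the partial coloring up to depth `d`. -/
structure Inv (L : Sym2 V → Finset ℕ) (N q : ℕ) (d : ℕ)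
    (col : V → ℕ) (F : V → Finset ℕ) : Prop where
  mem : ∀ w, w ≠ R.root → R.dep w ≤ d → col w ∈ L s(R.par w, w)
  propSib : ∀ w w', w ≠ R.root → w' ≠ R.root → w ≠ w' → R.par w = R.par w' →
      R.dep w ≤ d → col w ≠ col w'
  propPar : ∀ w, w ≠ R.root → R.par w ≠ R.root → R.dep w ≤ d → col w ≠ col (R.par w)
  starC : ∀ w, w ≠ R.root → R.par w ≠ R.root → R.par (R.par w) ≠ R.root →
      R.dep w ≤ d → col w = col (R.par (R.par w)) →
      col (R.par w) ∉ Cp R col (R.par (R.par w))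
  starD : ∀ v v' w w', v ≠ R.root → v' ≠ R.root → w ≠ R.root → w' ≠ R.root →
      v ≠ v' → R.par v = R.par v' → R.par w = v → R.par w' = v' →
      R.dep w ≤ d → ¬(col w = col v' ∧ col w' = col v)
  J1 : ∀ v, R.dep v = d → (F v).card + T.degree v ≤ N + (if v = R.root then 0 else 1)
  J2 : ∀ v, v ≠ R.root → R.dep v = d → col v ∈ F v
  J3 : ∀ v, v ≠ R.root → R.dep v = d → (R.children v).Nonempty →
      (Cp R col v \ F v).card ≤ q
  K1 : ∀ v v', v ≠ R.root → v' ≠ R.root → v ≠ v' → R.par v = R.par v' → R.dep v = d →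
      (R.children v).Nonempty → (R.children v').Nonempty → col v' ∈ F v ∨ col v ∈ F v'
  K2 : ∀ v, v ≠ R.root → R.dep v = d → (R.children v).Nonempty → R.par v ≠ R.root →
      col v ∈ Cp R col (R.par v) → col (R.par v) ∈ F v

lemma inv_base (L : Sym2 V → Finset ℕ) (N q : ℕ) (hroot : T.degree R.root ≤ N) :
    Inv R L N q 0 (fun _ => 0) (fun _ => ∅) := by
  have hdep : ∀ w : V, w ≠ R.root → ¬ R.dep w ≤ 0 := by
    intro w hw
    have := R.dep_pos hw
    omega
  refine ⟨?_, ?_, ?_, ?_, ?_, ?_, ?_, ?_, ?_, ?_⟩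
  · intro w hw hd; exact absurd hd (hdep w hw)
  · intro w w' hw _ _ _ hd; exact absurd hd (hdep w hw)
  · intro w hw _ hd; exact absurd hd (hdep w hw)
  · intro w hw _ _ hd; exact absurd hd (hdep w hw)
  · intro v v' w w' _ _ hw _ _ _ _ _ hd; exact absurd hd (hdep w hw)
  · intro v hd
    have hv : v = R.root := R.root_of_dep_zero hd
    subst hv
    simp [hroot]
  · intro v hv hd; exact absurd (R.root_of_dep_zero hd) hv
  · intro v hv hd; exact absurd (R.root_of_dep_zero hd) hv
  · intro v v' hv _ _ _ hd; exact absurd (R.root_of_dep_zero hd) hv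
  · intro v hv hd; exact absurd (R.root_of_dep_zero hd) hv

/-- The key local step: coloring all edges from a frontier vertex `v` to its children,
together with the data of the forbidden sets for the children. -/
lemma step_main {L : Sym2 V → Finset ℕ} {Δ q N : ℕ}
    (hdeg : ∀ x, T.degree x ≤ Δ) (hq : Δ ≤ 2 * q + 1) (hN : N = Δ + q)
    (hL : ∀ e ∈ T.edgeSet, N ≤ (L e).card)
    {d : ℕ} {col : V → ℕ} {F : V → Finset ℕ} (inv : Inv R L N q d col F)
    (v : V) (hdv : R.dep v = d) :
    ∃ (c : V → ℕ) (F' : V → Finset ℕ),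
      (∀ w ∈ R.children v, c w ∈ L s(R.par w, w) ∧ c w ∉ F v) ∧
      Set.InjOn c (R.children v) ∧
      (∀ w ∈ R.children v,
        (F' w).card + T.degree w ≤ N + 1 ∧
        c w ∈ F' w ∧
        ((R.children w).Nonempty →
          (((((R.children v).erase w).image c ∪
            (if v = R.root then ∅ else {col v})) : Finset ℕ) \ F' w).card ≤ q) ∧
        ((R.children w).Nonempty → v ≠ R.root → c w ∈ Cp R col v → col v ∈ F' w)) ∧
      (∀ w ∈ R.children v, ∀ w' ∈ R.children v, w ≠ w' →
        (R.children w).Nonempty → (R.children w').Nonempty →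
        c w' ∈ F' w ∨ c w ∈ F' w') := by
  classical
  set kids := R.children v with hkids
  -- children basic facts
  have hker : ∀ w ∈ kids, R.par w = v ∧ w ≠ R.root := fun w hw => R.mem_children.mp hw
  -- Step 1 : choose distinct colors for the children, avoiding F v
  have hLk : ∀ w ∈ kids, N ≤ (L s(R.par w, w)).card :=
    fun w hw => hL _ (R.parEdge_mem_edgeSet (hker w hw).2)
  have hAk : (F v).card + kids.card ≤ N := by
    have hJ1 := inv.J1 v hdv
    have hde := R.degree_eq v
    rw [← hkids] at hde
    by_cases hv : v = R.root
    · rw [if_pos hv] at hJ1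
      rw [if_pos hv] at hde
      omega
    · rw [if_neg hv] at hJ1
      rw [if_neg hv] at hde
      omega
  obtain ⟨c, hc1, hc2⟩ := exists_distinct_choice kids (F v) (fun w => L s(R.par w, w)) N hLk hAk
  -- Step 2 : the internal children and the bad ones
  set IC := kids.filter (fun w => (R.children w).Nonempty) with hIC
  set bad := IC.filter (fun w => ¬ v = R.root ∧ c w ∈ Cp R col v) with hbad
  have hICsub : IC ⊆ kids := Finset.filter_subset _ _
  have hbadsub : bad ⊆ IC := Finset.filter_subset _ _
  have hbadq : bad.card ≤ q := by
    rcases Finset.eq_empty_or_nonempty bad with hbe | hbne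
    · simp [hbe]
    · have hvr : ¬ v = R.root := by
        obtain ⟨w, hw⟩ := hbne
        exact ((Finset.mem_filter.mp hw).2).1
      have hkne : kids.Nonempty := by
        obtain ⟨w, hw⟩ := hbne
        exact ⟨w, hICsub (hbadsub hw)⟩
      calc bad.card ≤ (Cp R col v \ F v).card := by
            apply Finset.card_le_card_of_injOn c
            · intro w hw
              rw [Finset.mem_coe] at hw; rw [Finset.mem_coe, Finset.mem_sdiff]
              exact ⟨((Finset.mem_filter.mp hw).2).2, (hc1 w (hICsub (hbadsub hw))).2⟩
            · exact hc2.mono (Finset.coe_subset.mpr (hbadsub.trans hICsub))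
        _ ≤ q := inv.J3 v hvr hdv hkne
  -- Step 3 : the placement indexing
  set k' := IC.card with hk'
  have hdegv := R.degree_eq v
  rw [← hkids] at hdegv
  have hgex : ∃ g : V → ℕ, Set.InjOn g ↑IC ∧ (∀ x ∈ IC, g x < k') ∧
      (∀ x ∈ bad, g x % 2 = 1 ∨ k' + 1 ≤ 2 * q) := by
    by_cases hplace : bad.card ≤ k' / 2
    · obtain ⟨g, h1, h2, h3⟩ := exists_placement IC bad hbadsub hplace
      exact ⟨g, h1, h2, fun x hx => Or.inl (h3 x hx)⟩
    · obtain ⟨g, h1, h2, _⟩ :=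
        exists_placement IC (∅ : Finset V) (Finset.empty_subset _) (by simp)
      exact ⟨g, h1, h2, fun x hx => Or.inr (by omega)⟩
  obtain ⟨g, hg1, hg2, hgbad⟩ := hgex
  -- Step 4 : the avoided sets B
  set outS : V → Finset V := fun w => IC.filter (fun w' => w' ≠ w ∧ Rel (g w) (g w')) with houtS
  have houtcard : ∀ w ∈ IC, (outS w).card ≤
      (if g w % 2 = 0 then k' / 2 else (k' + 1) / 2 - 1) := by
    intro w hw
    refine le_trans (Finset.card_le_card_of_injOn g ?_
      (hg1.mono (Finset.coe_subset.mpr (Finset.filter_subset _ _))))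
      (card_rel_le k' (g w) (hg2 w hw))
    intro w' hw'
    rw [houtS, Finset.mem_coe, Finset.mem_filter] at hw'
    rw [Finset.mem_coe, Finset.mem_filter, Finset.mem_range]
    exact ⟨hg2 w' hw'.1, hw'.2.2⟩
  set B : V → Finset ℕ := fun w => (outS w).image c ∪
      (if ¬ v = R.root ∧ c w ∈ Cp R col v then {col v} else ∅) with hB
  set CpL : V → Finset ℕ := fun w => ((kids.erase w).image c ∪
      (if v = R.root then ∅ else {col v})) with hCpL
  have hBsub : ∀ w ∈ IC, B w ⊆ CpL w := by
    intro w hw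
    rw [hB, hCpL]
    apply Finset.union_subset
    · refine Finset.Subset.trans ?_ Finset.subset_union_left
      apply Finset.image_subset_image
      intro w' hw'
      rw [houtS, Finset.mem_filter] at hw'
      exact Finset.mem_erase.mpr ⟨hw'.2.1, hICsub hw'.1⟩
    · by_cases hD : ¬ v = R.root ∧ c w ∈ Cp R col v
      · rw [if_pos hD]
        refine Finset.Subset.trans ?_ Finset.subset_union_right
        rw [if_neg hD.1]
      · rw [if_neg hD]
        exact Finset.empty_subset _
  have hk'le : k' ≤ Δ := by
    have h1 : IC.card ≤ kids.card := Finset.card_le_card hICsub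
    have h2 := hdeg v
    by_cases hv : v = R.root
    · rw [if_pos hv] at hdegv; omega
    · rw [if_neg hv] at hdegv; omega
  have hBcard : ∀ w ∈ IC, (B w).card ≤ q := by
    intro w hw
    have hico : (B w).card ≤ (outS w).card +
        (if (¬ v = R.root ∧ c w ∈ Cp R col v) then 1 else 0) := by
      rw [hB]
      refine le_trans (Finset.card_union_le _ _) ?_
      gcongr
      · exact Finset.card_image_le
      · split <;> simp
    have h2 := houtcard w hw
    rw [hk'] at h2
    have hglt := hg2 w hw
    rw [hk'] at hglt
    have hpos : 1 ≤ IC.card := Finset.card_pos.mpr ⟨w, hw⟩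
    have hk'le2 := hk'le
    rw [hk'] at hk'le2
    by_cases hD : ¬ v = R.root ∧ c w ∈ Cp R col v
    · rw [if_pos hD] at hico
      have hwbad : w ∈ bad := Finset.mem_filter.mpr ⟨hw, hD⟩
      have hknr : IC.card + 1 ≤ Δ := by
        have h1 : IC.card ≤ kids.card := Finset.card_le_card hICsub
        have h3 := hdeg v
        rw [if_neg hD.1] at hdegv
        omega
      rcases hgbad w hwbad with hodd | hsmall
      · rw [if_neg (by omega : ¬ g w % 2 = 0)] at h2
        omega
      · rw [hk'] at hsmall
        by_cases hp : g w % 2 = 0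
        · rw [if_pos hp] at h2; omega
        · rw [if_neg hp] at h2; omega
    · rw [if_neg hD] at hico
      by_cases hp : g w % 2 = 0
      · rw [if_pos hp] at h2; omega
      · rw [if_neg hp] at h2; omega
  -- Step 5 : padding and the forbidden sets for the children
  have hpadex : ∀ w, ∃ pad : Finset ℕ, pad ⊆ CpL w \ B w ∧
      pad.card = (CpL w \ B w).card - q :=
    fun w => Finset.exists_subset_card_eq (Nat.sub_le _ _)
  choose padf hpadsub hpadcard using hpadex
  set F' : V → Finset ℕ := fun w => if w ∈ IC then insert (c w) (B w ∪ padf w) else {c w}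
    with hF'
  have hFIC : ∀ w ∈ IC, F' w = insert (c w) (B w ∪ padf w) := by
    intro w hw
    rw [hF']
    simp only [if_pos hw]
  have hFnIC : ∀ w, w ∉ IC → F' w = {c w} := by
    intro w hw
    rw [hF']
    simp only [if_neg hw]
  have hpaddisj : ∀ w, Disjoint (B w) (padf w) := by
    intro w
    rw [Finset.disjoint_right]
    intro a ha
    exact (Finset.mem_sdiff.mp (hpadsub w ha)).2
  have hcnot : ∀ w ∈ kids, c w ∉ CpL w := by
    intro w hw hmem
    rw [hCpL, Finset.mem_union] at hmem
    rcases hmem with h | h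
    · obtain ⟨w', hw', hww'⟩ := Finset.mem_image.mp h
      obtain ⟨hne, hw'k⟩ := Finset.mem_erase.mp hw'
      exact hne (hc2 (Finset.mem_coe.mpr hw'k) (Finset.mem_coe.mpr hw) hww')
    · by_cases hv : v = R.root
      · rw [if_pos hv] at h
        simp at h
      · rw [if_neg hv, Finset.mem_singleton] at h
        exact (hc1 w hw).2 (h ▸ inv.J2 v hv hdv)
  refine ⟨c, F', hc1, hc2, ?_, ?_⟩
  · intro w hw
    have hwnr := (hker w hw).2
    by_cases hwIC : w ∈ IC
    · have hFeq := hFIC w hwIC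
      have hcard1 : (B w ∪ padf w).card = (B w).card + (padf w).card :=
        Finset.card_union_of_disjoint (hpaddisj w)
      have hsdcard : (CpL w \ B w).card + (B w).card = (CpL w).card :=
        Finset.card_sdiff_add_card_eq_card (hBsub w hwIC)
      have hCpLcard : (CpL w).card + 1 ≤ T.degree v := by
        have h1 : ((kids.erase w).image c).card ≤ kids.card - 1 := by
          refine le_trans Finset.card_image_le ?_
          rw [Finset.card_erase_of_mem hw]
        have h2 : (CpL w).card ≤ ((kids.erase w).image c).card +
            (if v = R.root then 0 else 1) := by
          rw [hCpL]
          refine le_trans (Finset.card_union_le _ _) ?_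
          gcongr
          split <;> simp
        have h5 : 1 ≤ kids.card := Finset.card_pos.mpr ⟨w, hw⟩
        by_cases hv : v = R.root
        · rw [if_pos hv] at hdegv h2; omega
        · rw [if_neg hv] at hdegv h2; omega
      refine ⟨?_, ?_, ?_, ?_⟩
      · rw [hFeq]
        have hic : (insert (c w) (B w ∪ padf w)).card ≤ (B w ∪ padf w).card + 1 :=
          Finset.card_insert_le _ _
        have hBq := hBcard w hwIC
        have hdw := hdeg w
        have hdv' := hdeg v
        by_cases hbig : (CpL w \ B w).card ≤ q
        · have hp0 : (padf w).card = 0 := by rw [hpadcard w]; omega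
          omega
        · have := hpadcard w
          omega
      · rw [hFeq]; exact Finset.mem_insert_self _ _
      · intro _
        have hcnot' : ¬ (c w ∈ (kids.erase w).image c ∨
            c w ∈ (if v = R.root then (∅ : Finset ℕ) else {col v})) := by
          intro hmem
          exact hcnot w hw (by rw [hCpL, Finset.mem_union]; exact hmem)
        have hgoalEq : (((kids.erase w).image c ∪ (if v = R.root then ∅ else {col v})) \ F' w)
            = (CpL w \ B w) \ padf w := by
          rw [hFeq]
          ext x
          simp only [Finset.mem_sdiff, Finset.mem_insert, Finset.mem_union, hCpL]
          constructor
          · rintro ⟨hx1, hx2⟩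
            push_neg at hx2
            exact ⟨⟨hx1, hx2.2.1⟩, hx2.2.2⟩
          · rintro ⟨⟨hx1, hx2⟩, hx3⟩
            refine ⟨hx1, ?_⟩
            push_neg
            exact ⟨fun hxc => absurd (hxc ▸ hx1) hcnot', hx2, hx3⟩
        rw [hgoalEq, Finset.card_sdiff_of_subset (hpadsub w), hpadcard w]
        omega
      · intro _ hvnr hcw
        rw [hFeq]
        apply Finset.mem_insert_of_mem
        apply Finset.mem_union_left
        rw [hB]
        apply Finset.mem_union_right
        rw [if_pos ⟨hvnr, hcw⟩]
        exact Finset.mem_singleton_self _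
    · have hFeq := hFnIC w hwIC
      have hwint : ¬ (R.children w).Nonempty := by
        intro hcon
        exact hwIC (Finset.mem_filter.mpr ⟨hw, hcon⟩)
      refine ⟨?_, ?_, ?_, ?_⟩
      · rw [hFeq]
        have := hdeg w
        simp only [Finset.card_singleton]
        omega
      · rw [hFeq]; exact Finset.mem_singleton_self _
      · intro h; exact absurd h hwint
      · intro h; exact absurd h hwint
  · intro w hw w' hw' hne hint hint'
    have hwIC : w ∈ IC := Finset.mem_filter.mpr ⟨hw, hint⟩
    have hw'IC : w' ∈ IC := Finset.mem_filter.mpr ⟨hw', hint'⟩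
    have hgne : g w ≠ g w' :=
      fun h => hne (hg1 (Finset.mem_coe.mpr hwIC) (Finset.mem_coe.mpr hw'IC) h)
    have hmem : ∀ a b : V, a ∈ IC → b ∈ IC → b ≠ a → Rel (g a) (g b) → c b ∈ F' a := by
      intro a b ha hb hba hrel
      have h1 : b ∈ outS a := by
        rw [houtS, Finset.mem_filter]
        exact ⟨hb, hba, hrel⟩
      have h2 : c b ∈ B a := by
        rw [hB]
        exact Finset.mem_union_left _ (Finset.mem_image_of_mem c h1)
      rw [hFIC a ha]
      exact Finset.mem_insert_of_mem (Finset.mem_union_left _ h2)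
    rcases rel_total hgne with hrel | hrel
    · exact Or.inl (hmem w w' hwIC hw'IC (Ne.symm hne) hrel)
    · exact Or.inr (hmem w' w hw'IC hwIC hne hrel)

lemma Cp_congr {col₁ col₂ : V → ℕ} {x : V}
    (h1 : ∀ y ∈ (R.children (R.par x)).erase x, col₁ y = col₂ y)
    (h2 : col₁ (R.par x) = col₂ (R.par x)) : Cp R col₁ x = Cp R col₂ x := by
  unfold Cp
  rw [Finset.image_congr h1, h2]

lemma inv_step {L : Sym2 V → Finset ℕ} {Δ q N : ℕ}
    (hdeg : ∀ x, T.degree x ≤ Δ) (hq : Δ ≤ 2 * q + 1) (hN : N = Δ + q)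
    (hL : ∀ e ∈ T.edgeSet, N ≤ (L e).card)
    {d : ℕ} {col : V → ℕ} {F : V → Finset ℕ} (inv : Inv R L N q d col F) :
    ∃ col' F', Inv R L N q (d + 1) col' F' := by
  classical
  have hstep := fun (v : V) (hdv : R.dep v = d) => step_main R hdeg hq hN hL inv v hdv
  set cFn : V → (V → ℕ) :=
    fun v => if h : R.dep v = d then (hstep v h).choose else fun _ => 0 with hcFn
  set FFn : V → (V → Finset ℕ) :=
    fun v => if h : R.dep v = d then (hstep v h).choose_spec.choose else fun _ => ∅ with hFFn
  have hspec : ∀ v, R.dep v = d →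
      ((∀ w ∈ R.children v, cFn v w ∈ L s(R.par w, w) ∧ cFn v w ∉ F v) ∧
       Set.InjOn (cFn v) (R.children v) ∧
       (∀ w ∈ R.children v, (FFn v w).card + T.degree w ≤ N + 1 ∧ cFn v w ∈ FFn v w ∧
         ((R.children w).Nonempty →
           (((((R.children v).erase w).image (cFn v) ∪
             (if v = R.root then ∅ else {col v})) : Finset ℕ) \ FFn v w).card ≤ q) ∧
         ((R.children w).Nonempty → v ≠ R.root → cFn v w ∈ Cp R col v → col v ∈ FFn v w)) ∧
       (∀ w ∈ R.children v, ∀ w' ∈ R.children v, w ≠ w' → (R.children w).Nonempty →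
         (R.children w').Nonempty → cFn v w' ∈ FFn v w ∨ cFn v w ∈ FFn v w')) := by
    intro v hdv
    have e1 : cFn v = (hstep v hdv).choose := by
      rw [hcFn]; exact dif_pos hdv
    have e2 : FFn v = (hstep v hdv).choose_spec.choose := by
      rw [hFFn]; exact dif_pos hdv
    rw [e1, e2]
    exact (hstep v hdv).choose_spec.choose_spec
  set col' : V → ℕ := fun x => if R.dep x = d + 1 then cFn (R.par x) x else col x with hcol'
  set F' : V → Finset ℕ := fun x => if R.dep x = d + 1 then FFn (R.par x) x else F x with hF'
  have hold : ∀ x, R.dep x ≤ d → col' x = col x := by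
    intro x hx
    rw [hcol']
    simp only [if_neg (by omega : ¬ R.dep x = d + 1)]
  have hnew : ∀ x, R.dep x = d + 1 → col' x = cFn (R.par x) x := by
    intro x hx
    rw [hcol']
    simp only [if_pos hx]
  have hFold : ∀ x, R.dep x ≤ d → F' x = F x := by
    intro x hx
    rw [hF']
    simp only [if_neg (by omega : ¬ R.dep x = d + 1)]
  have hFnew : ∀ x, R.dep x = d + 1 → F' x = FFn (R.par x) x := by
    intro x hx
    rw [hF']
    simp only [if_pos hx]
  have hchild_mem : ∀ x : V, x ≠ R.root → x ∈ R.children (R.par x) :=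
    fun x hx => R.mem_children.mpr ⟨rfl, hx⟩
  have hdep_eq : ∀ x : V, x ≠ R.root → R.dep x = R.dep (R.par x) + 1 := by
    intro x hx
    have := R.dep_par x hx
    omega
  have hdeppar : ∀ x : V, x ≠ R.root → R.dep x = d + 1 → R.dep (R.par x) = d := by
    intro x hx hd
    have := hdep_eq x hx
    omega
  -- congruence for Cp at old vertices
  have hCpold : ∀ x : V, x ≠ R.root → R.dep x ≤ d → Cp R col' x = Cp R col x := by
    intro x hx hd
    apply Cp_congr
    · intro y hy
      have hy' := Finset.mem_erase.mp hy
      have hyd : R.dep y = R.dep (R.par x) + 1 := R.dep_of_mem_children hy'.2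
      have hxd := hdep_eq x hx
      exact hold y (by omega)
    · apply hold
      have := hdep_eq x hx
      omega
  refine ⟨col', F', ?_, ?_, ?_, ?_, ?_, ?_, ?_, ?_, ?_, ?_⟩
  · -- mem
    intro w hw hd
    by_cases hdw : R.dep w ≤ d
    · rw [hold w hdw]
      exact inv.mem w hw hdw
    · have hdw1 : R.dep w = d + 1 := by omega
      rw [hnew w hdw1]
      exact ((hspec (R.par w) (hdeppar w hw hdw1)).1 w (hchild_mem w hw)).1
  · -- propSib
    intro w w' hw hw' hne hpar hd
    have hdepeq : R.dep w = R.dep w' := by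
      rw [hdep_eq w hw, hdep_eq w' hw', hpar]
    by_cases hdw : R.dep w ≤ d
    · rw [hold w hdw, hold w' (by omega)]
      exact inv.propSib w w' hw hw' hne hpar hdw
    · have hdw1 : R.dep w = d + 1 := by omega
      rw [hnew w hdw1, hnew w' (by omega)]
      rw [hpar]
      intro hcc
      exact hne ((hspec (R.par w') (by rw [← hpar]; exact hdeppar w hw hdw1)).2.1
        (Finset.mem_coe.mpr (by rw [← hpar]; exact hchild_mem w hw))
        (Finset.mem_coe.mpr (hchild_mem w' hw')) hcc)
  · -- propPar
    intro w hw hpw hd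
    have hdw2 := hdep_eq w hw
    by_cases hdw : R.dep w ≤ d
    · rw [hold w hdw, hold (R.par w) (by omega)]
      exact inv.propPar w hw hpw hdw
    · have hdw1 : R.dep w = d + 1 := by omega
      have hpd : R.dep (R.par w) = d := hdeppar w hw hdw1
      rw [hnew w hdw1, hold (R.par w) (by omega)]
      intro hcc
      have h1 := ((hspec (R.par w) hpd).1 w (hchild_mem w hw)).2
      have h2 := inv.J2 (R.par w) hpw hpd
      rw [hcc] at h1
      exact h1 h2
  · -- starC
    intro w hw hv hu hd hcc
    have hdw2 := hdep_eq w hw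
    have hdv2 := hdep_eq (R.par w) hv
    have hdu2 := hdep_eq (R.par (R.par w)) hu
    by_cases hdw : R.dep w ≤ d
    · rw [hold w hdw] at hcc
      rw [hold (R.par (R.par w)) (by omega)] at hcc
      rw [hold (R.par w) (by omega), hCpold (R.par (R.par w)) hu (by omega)]
      exact inv.starC w hw hv hu hdw hcc
    · have hdw1 : R.dep w = d + 1 := by omega
      have hpd : R.dep (R.par w) = d := hdeppar w hw hdw1
      rw [hnew w hdw1, hold (R.par (R.par w)) (by omega)] at hcc
      rw [hold (R.par w) (by omega), hCpold (R.par (R.par w)) hu (by omega)]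
      intro hmem
      have hK2 := inv.K2 (R.par w) hv hpd ⟨w, hchild_mem w hw⟩ hu hmem
      have h1 := ((hspec (R.par w) hpd).1 w (hchild_mem w hw)).2
      rw [hcc] at h1
      exact h1 hK2
  · -- starD
    intro v v' w w' hv hv' hw hw' hne hpar hpw hpw' hd
    have hdw2 := hdep_eq w hw
    have hdw'2 := hdep_eq w' hw'
    have hdveq : R.dep v = R.dep v' := by
      rw [hdep_eq v hv, hdep_eq v' hv', hpar]
    by_cases hdw : R.dep w ≤ d
    · rw [hold w hdw, hold w' (by rw [hpw'] at hdw'2; rw [hpw] at hdw2; omega),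
        hold v (by rw [hpw] at hdw2; omega), hold v' (by rw [hpw] at hdw2; omega)]
      exact inv.starD v v' w w' hv hv' hw hw' hne hpar hpw hpw' hdw
    · have hdw1 : R.dep w = d + 1 := by omega
      have hdv1 : R.dep v = d := by rw [hpw] at hdw2; omega
      have hdv'1 : R.dep v' = d := by omega
      rw [hnew w hdw1, hnew w' (by rw [hpw'] at hdw'2; omega),
        hold v (by omega), hold v' (by omega)]
      rw [hpw, hpw']
      rintro ⟨h1, h2⟩
      rcases inv.K1 v v' hv hv' hne hpar hdv1 ⟨w, hpw ▸ hchild_mem w hw⟩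
        ⟨w', hpw' ▸ hchild_mem w' hw'⟩ with hF | hF
      · have := ((hspec v hdv1).1 w (hpw ▸ hchild_mem w hw)).2
        rw [h1] at this
        exact this hF
      · have := ((hspec v' hdv'1).1 w' (hpw' ▸ hchild_mem w' hw')).2
        rw [h2] at this
        exact this hF
  · -- J1
    intro x hx
    have hxr : x ≠ R.root := by
      intro h
      rw [h, R.dep_root] at hx
      omega
    rw [hFnew x hx, if_neg hxr]
    exact ((hspec (R.par x) (hdeppar x hxr hx)).2.2.1 x (hchild_mem x hxr)).1
  · -- J2
    intro x hx hdx
    rw [hFnew x hdx, hnew x hdx]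
    exact ((hspec (R.par x) (hdeppar x hx hdx)).2.2.1 x (hchild_mem x hx)).2.1
  · -- J3
    intro x hx hdx hint
    have hpd : R.dep (R.par x) = d := hdeppar x hx hdx
    have hCpx : Cp R col' x = (((R.children (R.par x)).erase x).image (cFn (R.par x)) ∪
        (if R.par x = R.root then ∅ else {col (R.par x)})) := by
      unfold Cp
      have himg : ((R.children (R.par x)).erase x).image col' =
          ((R.children (R.par x)).erase x).image (cFn (R.par x)) := by
        apply Finset.image_congr
        intro y hy
        have hy' := Finset.mem_erase.mp hy
        have hyp : R.par y = R.par x := (R.mem_children.mp hy'.2).1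
        have hyd : R.dep y = d + 1 := by
          rw [R.dep_of_mem_children hy'.2, hpd]
        rw [hnew y hyd, hyp]
      rw [himg, hold (R.par x) (by omega)]
    rw [hCpx, hFnew x hdx]
    exact ((hspec (R.par x) hpd).2.2.1 x (hchild_mem x hx)).2.2.1 hint
  · -- K1
    intro x x' hx hx' hne hpar hdx hint hint'
    have hdx' : R.dep x' = d + 1 := by
      rw [hdep_eq x' hx', ← hpar, ← hdep_eq x hx, hdx]
    rw [hnew x hdx, hnew x' hdx', hFnew x hdx, hFnew x' hdx', hpar]
    exact (hspec (R.par x') (by rw [← hpar]; exact hdeppar x hx hdx)).2.2.2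
      x (by rw [← hpar]; exact hchild_mem x hx) x' (hchild_mem x' hx') hne hint hint'
  · -- K2
    intro x hx hdx hint hpx hmem
    have hpd : R.dep (R.par x) = d := hdeppar x hx hdx
    rw [hCpold (R.par x) hpx (by omega), hnew x hdx] at hmem
    rw [hFnew x hdx, hold (R.par x) (by omega)]
    exact ((hspec (R.par x) hpd).2.2.1 x (hchild_mem x hx)).2.2.2 hint hpx hmem

end Main

/-- The main construction: a star edge coloring from lists for a tree. -/
lemma tree_star_choosable [Fintype V] {T : SimpleGraph V} (hT : T.IsTree) :
    StarChoosable T (3 * T.maxDegree / 2) := by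
  classical
  intro L hL
  obtain ⟨R⟩ := exists_rooted hT
  have hdeg : ∀ x, T.degree x ≤ T.maxDegree := fun x => T.degree_le_maxDegree x
  have hN : 3 * T.maxDegree / 2 = T.maxDegree + T.maxDegree / 2 := by omega
  have hq : T.maxDegree ≤ 2 * (T.maxDegree / 2) + 1 := by omega
  have hone : ∀ d, ∃ col F, Inv R L (3 * T.maxDegree / 2) (T.maxDegree / 2) d col F := by
    intro d
    induction d with
    | zero =>
      refine ⟨_, _, inv_base R L _ _ ?_⟩
      have := hdeg R.root
      omega
    | succ d ih =>
      obtain ⟨col, F, hI⟩ := ih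
      exact inv_step R hdeg hq hN hL hI
  obtain ⟨col, F, inv⟩ := hone (Finset.univ.sup R.dep)
  have hdle : ∀ x : V, R.dep x ≤ Finset.univ.sup R.dep :=
    fun x => Finset.le_sup (Finset.mem_univ x)
  -- the coloring on edges
  set φ : Sym2 V → ℕ := fun e =>
    if h : ∃ w, w ≠ R.root ∧ e = s(R.par w, w) then col h.choose else 0 with hφdef
  have hφ : ∀ w, w ≠ R.root → φ s(R.par w, w) = col w := by
    intro w hw
    have hex : ∃ w', w' ≠ R.root ∧ s(R.par w, w) = s(R.par w', w') := ⟨w, hw, rfl⟩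
    have : φ s(R.par w, w) = col hex.choose := by
      rw [hφdef]
      exact dif_pos hex
    rw [this]
    have hs := hex.choose_spec
    rw [R.parEdge_injOn hs.1 hw hs.2.symm]
  have hrep : ∀ e ∈ T.edgeSet, ∃ w, w ≠ R.root ∧ e = s(R.par w, w) := by
    intro e he
    induction e with
    | _ v w =>
      rw [mem_edgeSet] at he
      rcases R.adj_or v w he with hp | hp
      · have hvr : v ≠ R.root := R.ne_root_of_par hp he.ne'
        exact ⟨v, hvr, by rw [hp]; exact Sym2.eq_swap⟩
      · have hwr : w ≠ R.root := R.ne_root_of_par hp he.ne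
        exact ⟨w, hwr, by rw [hp]⟩
  -- helper: φ value on an edge given by a parent relation
  have hφU : ∀ a b : V, R.par a = b → b ≠ a → φ s(a, b) = col a := by
    intro a b hp hne
    have har : a ≠ R.root := R.ne_root_of_par hp hne
    rw [show s(a, b) = s(R.par a, a) by rw [hp]; exact Sym2.eq_swap]
    exact hφ a har
  have hφD : ∀ a b : V, R.par b = a → a ≠ b → φ s(a, b) = col b := by
    intro a b hp hne
    have hbr : b ≠ R.root := R.ne_root_of_par hp hne
    rw [show s(a, b) = s(R.par b, b) by rw [hp]]
    exact hφ b hbr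
  refine ⟨φ, ?_, ?_, ?_, ?_⟩
  · -- membership in the lists
    intro e he
    obtain ⟨w, hw, rfl⟩ := hrep e he
    rw [hφ w hw]
    exact inv.mem w hw (hdle w)
  · -- properness
    rintro e1 he1 e2 he2 ⟨hne, x, hx1, hx2⟩
    obtain ⟨w1, hw1, rfl⟩ := hrep e1 he1
    obtain ⟨w2, hw2, rfl⟩ := hrep e2 he2
    have hww : w1 ≠ w2 := by
      rintro rfl
      exact hne rfl
    rw [hφ w1 hw1, hφ w2 hw2]
    rw [Sym2.mem_iff] at hx1 hx2
    rcases hx1 with hx1 | hx1 <;> rcases hx2 with hx2 | hx2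
    · -- x = par w1 = par w2 : siblings
      exact inv.propSib w1 w2 hw1 hw2 hww (by rw [← hx1, ← hx2]) (hdle w1)
    · -- par w1 = w2
      have hp : R.par w1 = w2 := by rw [← hx1, hx2]
      intro hcc
      exact inv.propPar w1 hw1 (by rw [hp]; exact hw2) (hdle w1) (by rw [hp]; exact hcc)
    · -- w1 = par w2
      have hp : R.par w2 = w1 := by rw [← hx2, hx1]
      intro hcc
      exact inv.propPar w2 hw2 (by rw [hp]; exact hw1) (hdle w2) (by rw [hp]; exact hcc.symm)
    · -- w1 = w2
      exact absurd (hx1.symm.trans hx2) hww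
  · -- no bichromatic path of length 4
    intro u v p hp hlen
    rintro ⟨c1, c2, hcov⟩
    cases p with
    | nil => simp at hlen
    | cons h1 p =>
      rename_i v1
      cases p with
      | nil => simp at hlen
      | cons h2 p =>
        rename_i v2
        cases p with
        | nil => simp at hlen
        | cons h3 p =>
          rename_i v3
          cases p with
          | nil => simp at hlen
          | cons h4 p =>
            cases p with
            | cons h5 p => simp [Walk.length_cons] at hlen
            | nil =>
              clear hlen
              -- distinctness of the five vertices
              have hnd := hp.support_nodup
              simp only [Walk.support_cons, Walk.support_nil, List.nodup_cons,
                List.mem_cons, List.mem_singleton, List.not_mem_nil, or_false,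
                not_or, List.nodup_nil, and_true] at hnd
              obtain ⟨⟨h01, h02, h03, h04⟩, ⟨h12, h13, h14⟩, ⟨h23, h24⟩, h34, -⟩ := hnd
              -- the four edge colors
              have hc1 := hcov s(u, v1) (by simp [Walk.edges_cons])
              have hc2 := hcov s(v1, v2) (by simp [Walk.edges_cons])
              have hc3 := hcov s(v2, v3) (by simp [Walk.edges_cons])
              have hc4 := hcov s(v3, v) (by simp [Walk.edges_cons])
              rcases R.adj_or u v1 h1 with hA1 | hA1 <;>
                rcases R.adj_or v1 v2 h2 with hA2 | hA2 <;>
                rcases R.adj_or v2 v3 h3 with hA3 | hA3 <;>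
                rcases R.adj_or v3 v h4 with hA4 | hA4
              -- pruning : a downward step followed by an upward step is impossible
              all_goals try exact absurd (hA1.symm.trans hA2) h02
              all_goals try exact absurd (hA2.symm.trans hA3) h13
              all_goals try exact absurd (hA3.symm.trans hA4) h24
              -- Case UUUU
              · rw [hφU u v1 hA1 (Ne.symm h01)] at hc1
                rw [hφU v1 v2 hA2 (Ne.symm h12)] at hc2
                rw [hφU v2 v3 hA3 (Ne.symm h23)] at hc3
                rw [hφU v3 v hA4 (Ne.symm h34)] at hc4
                have hr0 : u ≠ R.root := R.ne_root_of_par hA1 (Ne.symm h01)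
                have hr1 : v1 ≠ R.root := R.ne_root_of_par hA2 (Ne.symm h12)
                have hr2 : v2 ≠ R.root := R.ne_root_of_par hA3 (Ne.symm h23)
                have hr3 : v3 ≠ R.root := R.ne_root_of_par hA4 (Ne.symm h34)
                have a12 : col u ≠ col v1 := by
                  have := inv.propPar u hr0 (by rw [hA1]; exact hr1) (hdle u)
                  rw [hA1] at this; exact this
                have a23 : col v1 ≠ col v2 := by
                  have := inv.propPar v1 hr1 (by rw [hA2]; exact hr2) (hdle v1)
                  rw [hA2] at this; exact this
                have a34 : col v2 ≠ col v3 := by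
                  have := inv.propPar v2 hr2 (by rw [hA3]; exact hr3) (hdle v2)
                  rw [hA3] at this; exact this
                have key : col u = col v2 ∧ col v1 = col v3 := by
                  rcases hc1 with h|h <;> rcases hc2 with h'|h' <;> rcases hc3 with h''|h'' <;>
                    rcases hc4 with h'''|h''' <;> omega
                have hstar := inv.starC u hr0 (by rw [hA1]; exact hr1)
                  (by rw [hA1, hA2]; exact hr2) (hdle u)
                rw [hA1, hA2] at hstar
                refine hstar key.1 ?_
                have := mem_Cp_par (R := R) (col := col) (v := v2) (by rw [hA3]; exact hr3)
                rw [hA3] at this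
                rw [key.2]
                exact this
              -- Case UUUD
              · rw [hφU u v1 hA1 (Ne.symm h01)] at hc1
                rw [hφU v1 v2 hA2 (Ne.symm h12)] at hc2
                rw [hφU v2 v3 hA3 (Ne.symm h23)] at hc3
                rw [hφD v3 v hA4 h34] at hc4
                have hr0 : u ≠ R.root := R.ne_root_of_par hA1 (Ne.symm h01)
                have hr1 : v1 ≠ R.root := R.ne_root_of_par hA2 (Ne.symm h12)
                have hr2 : v2 ≠ R.root := R.ne_root_of_par hA3 (Ne.symm h23)
                have hr4 : v ≠ R.root := R.ne_root_of_par hA4 h34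
                have a12 : col u ≠ col v1 := by
                  have := inv.propPar u hr0 (by rw [hA1]; exact hr1) (hdle u)
                  rw [hA1] at this; exact this
                have a23 : col v1 ≠ col v2 := by
                  have := inv.propPar v1 hr1 (by rw [hA2]; exact hr2) (hdle v1)
                  rw [hA2] at this; exact this
                have a34 : col v2 ≠ col v := by
                  exact inv.propSib v2 v hr2 hr4 h24 (by rw [hA3, hA4]) (hdle v2)
                have key : col u = col v2 ∧ col v1 = col v := by
                  rcases hc1 with h|h <;> rcases hc2 with h'|h' <;> rcases hc3 with h''|h'' <;>
                    rcases hc4 with h'''|h''' <;> omega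
                have hstar := inv.starC u hr0 (by rw [hA1]; exact hr1)
                  (by rw [hA1, hA2]; exact hr2) (hdle u)
                rw [hA1, hA2] at hstar
                refine hstar key.1 ?_
                have hsib : v ∈ R.children (R.par v2) := by
                  rw [hA3]
                  exact R.mem_children.mpr ⟨hA4, hr4⟩
                have := mem_Cp_of_sibling (R := R) (col := col) hsib (Ne.symm h24)
                rw [key.2]
                exact this
              -- Case UUDD
              · rw [hφU u v1 hA1 (Ne.symm h01)] at hc1
                rw [hφU v1 v2 hA2 (Ne.symm h12)] at hc2
                rw [hφD v2 v3 hA3 h23] at hc3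
                rw [hφD v3 v hA4 h34] at hc4
                have hr0 : u ≠ R.root := R.ne_root_of_par hA1 (Ne.symm h01)
                have hr1 : v1 ≠ R.root := R.ne_root_of_par hA2 (Ne.symm h12)
                have hr3 : v3 ≠ R.root := R.ne_root_of_par hA3 h23
                have hr4 : v ≠ R.root := R.ne_root_of_par hA4 h34
                have a12 : col u ≠ col v1 := by
                  have := inv.propPar u hr0 (by rw [hA1]; exact hr1) (hdle u)
                  rw [hA1] at this; exact this
                have a23 : col v1 ≠ col v3 := by
                  exact inv.propSib v1 v3 hr1 hr3 h13 (by rw [hA2, hA3]) (hdle v1)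
                have a34 : col v3 ≠ col v := by
                  have := inv.propPar v hr4 (by rw [hA4]; exact hr3) (hdle v)
                  rw [hA4] at this; exact this.symm
                have key : col u = col v3 ∧ col v1 = col v := by
                  rcases hc1 with h|h <;> rcases hc2 with h'|h' <;> rcases hc3 with h''|h'' <;>
                    rcases hc4 with h'''|h''' <;> omega
                exact inv.starD v1 v3 u v hr1 hr3 hr0 hr4 h13 (by rw [hA2, hA3]) hA1 hA4
                  (hdle u) ⟨key.1, key.2.symm⟩
              -- Case UDDD
              · rw [hφU u v1 hA1 (Ne.symm h01)] at hc1
                rw [hφD v1 v2 hA2 h12] at hc2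
                rw [hφD v2 v3 hA3 h23] at hc3
                rw [hφD v3 v hA4 h34] at hc4
                have hr0 : u ≠ R.root := R.ne_root_of_par hA1 (Ne.symm h01)
                have hr2 : v2 ≠ R.root := R.ne_root_of_par hA2 h12
                have hr3 : v3 ≠ R.root := R.ne_root_of_par hA3 h23
                have hr4 : v ≠ R.root := R.ne_root_of_par hA4 h34
                have a12 : col u ≠ col v2 := by
                  exact inv.propSib u v2 hr0 hr2 h02 (by rw [hA1, hA2]) (hdle u)
                have a23 : col v2 ≠ col v3 := by
                  have := inv.propPar v3 hr3 (by rw [hA3]; exact hr2) (hdle v3)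
                  rw [hA3] at this; exact this.symm
                have a34 : col v3 ≠ col v := by
                  have := inv.propPar v hr4 (by rw [hA4]; exact hr3) (hdle v)
                  rw [hA4] at this; exact this.symm
                have key : col u = col v3 ∧ col v2 = col v := by
                  rcases hc1 with h|h <;> rcases hc2 with h'|h' <;> rcases hc3 with h''|h'' <;>
                    rcases hc4 with h'''|h''' <;> omega
                have hstar := inv.starC v hr4 (by rw [hA4]; exact hr3)
                  (by rw [hA4, hA3]; exact hr2) (hdle v)
                rw [hA4, hA3] at hstar
                refine hstar key.2.symm ?_
                have hsib : u ∈ R.children (R.par v2) := by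
                  rw [hA2]
                  exact R.mem_children.mpr ⟨hA1, hr0⟩
                have := mem_Cp_of_sibling (R := R) (col := col) hsib h02
                rw [← key.1]
                exact this
              -- Case DDDD
              · rw [hφD u v1 hA1 h01] at hc1
                rw [hφD v1 v2 hA2 h12] at hc2
                rw [hφD v2 v3 hA3 h23] at hc3
                rw [hφD v3 v hA4 h34] at hc4
                have hr1 : v1 ≠ R.root := R.ne_root_of_par hA1 h01
                have hr2 : v2 ≠ R.root := R.ne_root_of_par hA2 h12
                have hr3 : v3 ≠ R.root := R.ne_root_of_par hA3 h23
                have hr4 : v ≠ R.root := R.ne_root_of_par hA4 h34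
                have a12 : col v1 ≠ col v2 := by
                  have := inv.propPar v2 hr2 (by rw [hA2]; exact hr1) (hdle v2)
                  rw [hA2] at this; exact this.symm
                have a23 : col v2 ≠ col v3 := by
                  have := inv.propPar v3 hr3 (by rw [hA3]; exact hr2) (hdle v3)
                  rw [hA3] at this; exact this.symm
                have a34 : col v3 ≠ col v := by
                  have := inv.propPar v hr4 (by rw [hA4]; exact hr3) (hdle v)
                  rw [hA4] at this; exact this.symm
                have key : col v1 = col v3 ∧ col v2 = col v := by
                  rcases hc1 with h|h <;> rcases hc2 with h'|h' <;> rcases hc3 with h''|h'' <;>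
                    rcases hc4 with h'''|h''' <;> omega
                have hstar := inv.starC v hr4 (by rw [hA4]; exact hr3)
                  (by rw [hA4, hA3]; exact hr2) (hdle v)
                rw [hA4, hA3] at hstar
                refine hstar key.2.symm ?_
                have := mem_Cp_par (R := R) (col := col) (v := v2) (by rw [hA2]; exact hr1)
                rw [hA2] at this
                rw [← key.1]
                exact this
  · -- no bichromatic cycles (trees are acyclic)
    intro u p hpc _
    exact absurd hpc (hT.IsAcyclic p)


end StarTreeProof

theorem stmt_3 {V : Type*} [Fintype V] (T : SimpleGraph V) (hT : T.IsTree) :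
    listStarChromaticIndex T ≤ 3 * T.maxDegree / 2 := by
  apply Nat.sInf_le
  exact StarTreeProof.tree_star_choosable hT
end

section
/- For every positive integer Δ there exists a tree T with maximum degree Δ such that the star chromatic index of T equals ⌊3Δ/2⌋. -/
open SimpleGraph
open scoped Classical

namespace TightTreeAux

abbrev TV (Δ : ℕ) : Type := Option (Fin Δ × Option (Fin (Δ - 1)))

variable (Δ : ℕ)

def rt : TV Δ := none
def ch (i : Fin Δ) : TV Δ := some (i, none)
def lf (i : Fin Δ) (j : Fin (Δ - 1)) : TV Δ := some (i, some j)

def tG : SimpleGraph (TV Δ) :=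
  SimpleGraph.fromRel (fun x y =>
    (∃ i, x = rt Δ ∧ y = ch Δ i) ∨ (∃ i j, x = ch Δ i ∧ y = lf Δ i j))

variable {Δ}

@[simp] lemma rt_ne_ch (i : Fin Δ) : rt Δ ≠ ch Δ i := by simp [rt, ch]
@[simp] lemma ch_ne_rt (i : Fin Δ) : ch Δ i ≠ rt Δ := by simp [rt, ch]
@[simp] lemma rt_ne_lf (i : Fin Δ) (j : Fin (Δ-1)) : rt Δ ≠ lf Δ i j := by simp [rt, lf]
@[simp] lemma lf_ne_rt (i : Fin Δ) (j : Fin (Δ-1)) : lf Δ i j ≠ rt Δ := by simp [rt, lf]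
@[simp] lemma ch_ne_lf (i i' : Fin Δ) (j : Fin (Δ-1)) : ch Δ i ≠ lf Δ i' j := by simp [ch, lf]
@[simp] lemma lf_ne_ch (i i' : Fin Δ) (j : Fin (Δ-1)) : lf Δ i j ≠ ch Δ i' := by simp [ch, lf]
@[simp] lemma ch_inj_iff {i i' : Fin Δ} : ch Δ i = ch Δ i' ↔ i = i' := by simp [ch]
@[simp] lemma lf_inj_iff {i i' : Fin Δ} {j j' : Fin (Δ-1)} :
    lf Δ i j = lf Δ i' j' ↔ i = i' ∧ j = j' := by simp [lf]

lemma tG_adj {x y : TV Δ} : (tG Δ).Adj x y ↔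
    (∃ i, x = rt Δ ∧ y = ch Δ i) ∨ (∃ i, x = ch Δ i ∧ y = rt Δ) ∨
    (∃ i j, x = ch Δ i ∧ y = lf Δ i j) ∨ (∃ i j, x = lf Δ i j ∧ y = ch Δ i) := by
  constructor
  · rintro ⟨hne, (⟨i, rfl, rfl⟩ | ⟨i, j, rfl, rfl⟩) | (⟨i, rfl, rfl⟩ | ⟨i, j, rfl, rfl⟩)⟩
    · exact Or.inl ⟨i, rfl, rfl⟩
    · exact Or.inr (Or.inr (Or.inl ⟨i, j, rfl, rfl⟩))
    · exact Or.inr (Or.inl ⟨i, rfl, rfl⟩)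
    · exact Or.inr (Or.inr (Or.inr ⟨i, j, rfl, rfl⟩))
  · rintro (⟨i, rfl, rfl⟩ | ⟨i, rfl, rfl⟩ | ⟨i, j, rfl, rfl⟩ | ⟨i, j, rfl, rfl⟩)
    · exact ⟨by simp [rt, ch], Or.inl (Or.inl ⟨i, rfl, rfl⟩)⟩
    · exact ⟨by simp [rt, ch], Or.inr (Or.inl ⟨i, rfl, rfl⟩)⟩
    · exact ⟨by simp [ch, lf], Or.inl (Or.inr ⟨i, j, rfl, rfl⟩)⟩
    · exact ⟨by simp [ch, lf], Or.inr (Or.inr ⟨i, j, rfl, rfl⟩)⟩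

lemma adj_rt_ch (i : Fin Δ) : (tG Δ).Adj (rt Δ) (ch Δ i) := tG_adj.2 (Or.inl ⟨i, rfl, rfl⟩)
lemma adj_ch_lf (i : Fin Δ) (j : Fin (Δ-1)) : (tG Δ).Adj (ch Δ i) (lf Δ i j) :=
  tG_adj.2 (Or.inr (Or.inr (Or.inl ⟨i, j, rfl, rfl⟩)))

lemma edge_mem {e : Sym2 (TV Δ)} : e ∈ (tG Δ).edgeSet ↔
    (∃ i, e = s(rt Δ, ch Δ i)) ∨ (∃ i j, e = s(ch Δ i, lf Δ i j)) := by
  induction e using Sym2.ind with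
  | _ x y =>
    rw [mem_edgeSet, tG_adj]
    constructor
    · rintro (⟨i, rfl, rfl⟩ | ⟨i, rfl, rfl⟩ | ⟨i, j, rfl, rfl⟩ | ⟨i, j, rfl, rfl⟩)
      · exact Or.inl ⟨i, rfl⟩
      · exact Or.inl ⟨i, Sym2.eq_swap⟩
      · exact Or.inr ⟨i, j, rfl⟩
      · exact Or.inr ⟨i, j, Sym2.eq_swap⟩
    · rintro (⟨i, h⟩ | ⟨i, j, h⟩) <;> rw [Sym2.eq_iff] at h
      · rcases h with ⟨rfl, rfl⟩ | ⟨rfl, rfl⟩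
        · exact Or.inl ⟨i, rfl, rfl⟩
        · exact Or.inr (Or.inl ⟨i, rfl, rfl⟩)
      · rcases h with ⟨rfl, rfl⟩ | ⟨rfl, rfl⟩
        · exact Or.inr (Or.inr (Or.inl ⟨i, j, rfl, rfl⟩))
        · exact Or.inr (Or.inr (Or.inr ⟨i, j, rfl, rfl⟩))

/-- connectivity -/
lemma tG_connected (hΔ : 0 < Δ) : (tG Δ).Connected := by
  have hrt : ∀ v : TV Δ, (tG Δ).Reachable v (rt Δ) := by
    rintro (_ | ⟨i, _ | j⟩)
    · exact Reachable.refl _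
    · exact (Adj.toWalk ((adj_rt_ch i).symm)).reachable
    · exact ((Adj.toWalk ((adj_ch_lf i j).symm)).append (Adj.toWalk ((adj_rt_ch i).symm))).reachable
  rw [connected_iff]
  exact ⟨fun u v => (hrt u).trans (hrt v).symm, ⟨rt Δ⟩⟩

/-- depth function -/
def depth : TV Δ → ℕ
  | none => 0
  | some (_, none) => 1
  | some (_, some _) => 2

/-- parent function -/
def parent : TV Δ → TV Δ
  | none => none
  | some (_, none) => none
  | some (i, some _) => some (i, none)

lemma adj_parent {x y : TV Δ} (h : (tG Δ).Adj x y) :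
    (y = parent x ∧ depth x = depth y + 1) ∨ (x = parent y ∧ depth y = depth x + 1) := by
  rcases tG_adj.1 h with ⟨i, rfl, rfl⟩ | ⟨i, rfl, rfl⟩ | ⟨i, j, rfl, rfl⟩ | ⟨i, j, rfl, rfl⟩
  · exact Or.inr ⟨rfl, rfl⟩
  · exact Or.inl ⟨rfl, rfl⟩
  · exact Or.inr ⟨rfl, rfl⟩
  · exact Or.inl ⟨rfl, rfl⟩


section Degrees

lemma nbhd_rt : (tG Δ).neighborFinset (rt Δ) = Finset.univ.image (ch Δ) := by
  ext x
  simp only [mem_neighborFinset, Finset.mem_image, Finset.mem_univ, true_and, tG_adj]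
  constructor
  · rintro (⟨i, h, rfl⟩ | ⟨i, h, _⟩ | ⟨i, j, h, _⟩ | ⟨i, j, h, _⟩)
    · exact ⟨i, rfl⟩
    · simp [rt, ch] at h
    · simp [rt, ch] at h
    · simp [rt, lf] at h
  · rintro ⟨i, rfl⟩
    exact Or.inl ⟨i, rfl⟩

lemma degree_rt : (tG Δ).degree (rt Δ) = Δ := by
  rw [← card_neighborFinset_eq_degree, nbhd_rt, Finset.card_image_of_injective _
    (fun a b h => by simpa using h)]
  simp

lemma nbhd_ch (i : Fin Δ) :
    (tG Δ).neighborFinset (ch Δ i) = insert (rt Δ) (Finset.univ.image (lf Δ i)) := by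
  ext x
  simp only [mem_neighborFinset, Finset.mem_insert, Finset.mem_image, Finset.mem_univ, true_and,
    tG_adj]
  constructor
  · rintro (⟨i', h, _⟩ | ⟨i', h, rfl⟩ | ⟨i', j, h, rfl⟩ | ⟨i', j, h, _⟩)
    · simp [rt, ch] at h
    · exact Or.inl rfl
    · exact Or.inr ⟨j, by rw [ch_inj_iff.mp h]⟩
    · simp [ch, lf] at h
  · rintro (rfl | ⟨j, rfl⟩)
    · exact Or.inr (Or.inl ⟨i, rfl, rfl⟩)
    · exact Or.inr (Or.inr (Or.inl ⟨i, j, rfl, rfl⟩))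

lemma degree_ch (hΔ : 0 < Δ) (i : Fin Δ) : (tG Δ).degree (ch Δ i) = Δ := by
  rw [← card_neighborFinset_eq_degree, nbhd_ch,
    Finset.card_insert_of_notMem (by simp), Finset.card_image_of_injective _
    (fun a b h => by simpa using (lf_inj_iff.mp h).2)]
  simp only [Finset.card_univ, Fintype.card_fin]
  omega

lemma nbhd_lf (i : Fin Δ) (j : Fin (Δ - 1)) :
    (tG Δ).neighborFinset (lf Δ i j) = {ch Δ i} := by
  ext x
  simp only [mem_neighborFinset, Finset.mem_singleton, tG_adj]
  constructor
  · rintro (⟨i', h, _⟩ | ⟨i', h, _⟩ | ⟨i', j', h, _⟩ | ⟨i', j', h, rfl⟩)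
    · simp [rt, lf] at h
    · simp [ch, lf] at h
    · simp [ch, lf] at h
    · obtain ⟨rfl, rfl⟩ := lf_inj_iff.mp h; rfl
  · rintro rfl
    exact Or.inr (Or.inr (Or.inr ⟨i, j, rfl, rfl⟩))

lemma degree_lf (i : Fin Δ) (j : Fin (Δ - 1)) : (tG Δ).degree (lf Δ i j) = 1 := by
  rw [← card_neighborFinset_eq_degree, nbhd_lf]; simp

lemma tG_maxDegree (hΔ : 0 < Δ) : (tG Δ).maxDegree = Δ := by
  apply le_antisymm
  · apply maxDegree_le_of_forall_degree_le
    rintro (_ | ⟨i, _ | j⟩)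
    · exact le_of_eq degree_rt
    · exact le_of_eq (degree_ch hΔ i)
    · exact le_trans (le_of_eq (degree_lf i j)) hΔ
  · have h := (tG Δ).degree_le_maxDegree (rt Δ)
    rwa [degree_rt] at h

end Degrees

section Coloring

variable (Δ)

/-- color of the edge from child `i` to leaf `j` -/
def col (i : Fin Δ) (j : Fin (Δ - 1)) : ℕ :=
  if (j : ℕ) < Δ / 2 then Δ + j else (i + ((j : ℕ) - Δ / 2) + 1) % Δ

def gfun : TV Δ → TV Δ → ℕ
  | none, some (i, none) => (i : ℕ)
  | some (i, none), some (i', some j) => if i = i' then col Δ i j else 0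
  | _, _ => 0

def φ₀ : Sym2 (TV Δ) → ℕ :=
  Sym2.lift ⟨fun x y => gfun Δ x y + gfun Δ y x, fun x y => by simp [Nat.add_comm]⟩

variable {Δ}

@[simp] lemma φ₀_rt_ch (i : Fin Δ) : φ₀ Δ s(rt Δ, ch Δ i) = (i : ℕ) := by
  simp [φ₀, gfun, rt, ch]

@[simp] lemma φ₀_ch_lf (i : Fin Δ) (j : Fin (Δ - 1)) :
    φ₀ Δ s(ch Δ i, lf Δ i j) = col Δ i j := by
  simp [φ₀, gfun, ch, lf]

lemma mod_cases' {a Δ : ℕ} (h : a < 2 * Δ) (hΔ : 0 < Δ) :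
    (a % Δ = a ∧ a < Δ) ∨ (a % Δ + Δ = a ∧ Δ ≤ a) := by
  rcases lt_or_ge a Δ with hlt | hge
  · exact Or.inl ⟨Nat.mod_eq_of_lt hlt, hlt⟩
  · refine Or.inr ⟨?_, hge⟩
    rw [Nat.mod_eq_sub_mod hge, Nat.mod_eq_of_lt (by omega)]
    omega

lemma col_lt (hΔ : 0 < Δ) (i : Fin Δ) (j : Fin (Δ - 1)) : col Δ i j < Δ + Δ / 2 := by
  unfold col
  split
  · omega
  · have := Nat.mod_lt ((i : ℕ) + ((j : ℕ) - Δ / 2) + 1) hΔ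
    omega

lemma col_ne (i : Fin Δ) (j : Fin (Δ - 1)) : col Δ i j ≠ (i : ℕ) := by
  have hi := i.isLt
  have hj := j.isLt
  unfold col
  split
  · omega
  · intro hcol
    have hb : (i : ℕ) + ((j : ℕ) - Δ / 2) + 1 < 2 * Δ := by omega
    rcases mod_cases' hb (by omega) with ⟨h1, h2⟩ | ⟨h1, h2⟩ <;> omega

lemma col_inj (i : Fin Δ) {j j' : Fin (Δ - 1)} (h : col Δ i j = col Δ i j') : j = j' := by
  have hi := i.isLt
  have hj := j.isLt
  have hj' := j'.isLt
  have hΔ : 0 < Δ := by omega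
  unfold col at h
  apply Fin.ext
  split at h <;> split at h
  · omega
  · have hb : (i : ℕ) + ((j' : ℕ) - Δ / 2) + 1 < 2 * Δ := by omega
    rcases mod_cases' hb hΔ with ⟨h1, h2⟩ | ⟨h1, h2⟩ <;> omega
  · have hb : (i : ℕ) + ((j : ℕ) - Δ / 2) + 1 < 2 * Δ := by omega
    rcases mod_cases' hb hΔ with ⟨h1, h2⟩ | ⟨h1, h2⟩ <;> omega
  · have hb : (i : ℕ) + ((j : ℕ) - Δ / 2) + 1 < 2 * Δ := by omega
    have hb' : (i : ℕ) + ((j' : ℕ) - Δ / 2) + 1 < 2 * Δ := by omega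
    rcases mod_cases' hb hΔ with ⟨h1, h2⟩ | ⟨h1, h2⟩ <;>
      rcases mod_cases' hb' hΔ with ⟨h1', h2'⟩ | ⟨h1', h2'⟩ <;> omega

lemma col_antisym {i i' : Fin Δ} {j j' : Fin (Δ - 1)} (hne : i ≠ i')
    (h1 : col Δ i j = (i' : ℕ)) (h2 : col Δ i' j' = (i : ℕ)) : False := by
  have hi := i.isLt
  have hi' := i'.isLt
  have hj := j.isLt
  have hj' := j'.isLt
  have hΔ : 0 < Δ := by omega
  have hvne : (i : ℕ) ≠ (i' : ℕ) := fun hc => hne (Fin.ext hc)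
  unfold col at h1 h2
  split at h1
  · omega
  · split at h2
    · omega
    · have hb : (i : ℕ) + ((j : ℕ) - Δ / 2) + 1 < 2 * Δ := by omega
      have hb' : (i' : ℕ) + ((j' : ℕ) - Δ / 2) + 1 < 2 * Δ := by omega
      rcases mod_cases' hb hΔ with ⟨g1, g2⟩ | ⟨g1, g2⟩ <;>
        rcases mod_cases' hb' hΔ with ⟨g1', g2'⟩ | ⟨g1', g2'⟩ <;> omega

end Coloring

lemma path4_struct {u v : TV Δ} (p : (tG Δ).Walk u v) (hp : p.IsPath) (hl : p.length = 4) :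
    ∃ (i i' : Fin Δ) (j j' : Fin (Δ - 1)), i ≠ i' ∧
      p.edges = [s(lf Δ i j, ch Δ i), s(ch Δ i, rt Δ), s(rt Δ, ch Δ i'),
        s(ch Δ i', lf Δ i' j')] := by
  cases p with
  | nil => simp at hl
  | cons h1 q =>
  cases q with
  | nil => simp at hl
  | cons h2 q =>
  cases q with
  | nil => simp at hl
  | cons h3 q =>
  cases q with
  | nil => simp at hl
  | cons h4 q =>
  cases q with
  | cons h5 q => simp [SimpleGraph.Walk.length_cons] at hl
  | nil =>
  simp only [SimpleGraph.Walk.isPath_def, SimpleGraph.Walk.support_cons,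
    SimpleGraph.Walk.support_nil, List.nodup_cons, List.mem_cons, List.mem_singleton,
    List.not_mem_nil, or_false, List.nodup_nil, and_true] at hp
  push_neg at hp
  rcases tG_adj.mp h1 with ⟨i1, rfl, rfl⟩ | ⟨i1, rfl, rfl⟩ | ⟨i1, j1, rfl, rfl⟩ | ⟨i1, j1, rfl, rfl⟩ <;>
    rcases tG_adj.mp h2 with ⟨i2, e21, rfl⟩ | ⟨i2, e21, rfl⟩ | ⟨i2, j2, e21, rfl⟩ | ⟨i2, j2, e21, rfl⟩ <;>
    (try (exfalso; simp_all [rt, ch, lf]; done)) <;>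
    rcases tG_adj.mp h3 with ⟨i3, e31, rfl⟩ | ⟨i3, e31, rfl⟩ | ⟨i3, j3, e31, rfl⟩ | ⟨i3, j3, e31, rfl⟩ <;>
    (try (exfalso; simp_all [rt, ch, lf]; done)) <;>
    rcases tG_adj.mp h4 with ⟨i4, e41, rfl⟩ | ⟨i4, e41, rfl⟩ | ⟨i4, j4, e41, rfl⟩ | ⟨i4, j4, e41, rfl⟩ <;>
    (try (exfalso; simp_all [rt, ch, lf]; done))
  obtain rfl : i3 = i4 := ch_inj_iff.mp e41
  refine ⟨i1, i3, j1, j4, fun hc => hp.2.1.2.1 (by rw [hc]), ?_⟩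
  simp [SimpleGraph.Walk.edges_cons, SimpleGraph.Walk.edges_nil]

lemma acyclic_of_parent {V : Type*} {G : SimpleGraph V} (par : V → V) (dep : V → ℕ)
    (hadj : ∀ {x y : V}, G.Adj x y →
      (y = par x ∧ dep x = dep y + 1) ∨ (x = par y ∧ dep y = dep x + 1)) :
    G.IsAcyclic := by
  intro v c hc
  classical
  have hF : ∀ e ∈ G.edgeSet, ∃ x : V, x ∈ e ∧ par x ∈ e ∧ dep x = dep (par x) + 1 := by
    intro e he
    induction e using Sym2.ind with
    | _ x y =>
      have hxy : G.Adj x y := by simpa using he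
      rcases hadj hxy with ⟨h1, h2⟩ | ⟨h1, h2⟩
      · refine ⟨x, by simp, ?_, h1 ▸ h2⟩
        rw [← h1]; simp
      · refine ⟨y, by simp, ?_, h1 ▸ h2⟩
        rw [← h1]; simp
  set F : Sym2 V → V := fun e =>
    if h : ∃ x : V, x ∈ e ∧ par x ∈ e ∧ dep x = dep (par x) + 1 then h.choose else v with hFdef
  have hFspec : ∀ e ∈ c.edges, F e ∈ e ∧ par (F e) ∈ e ∧ dep (F e) = dep (par (F e)) + 1 := by
    intro e he
    have h := hF e (c.edges_subset_edgeSet he)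
    simp only [hFdef, dif_pos h]
    exact h.choose_spec
  have hFne : ∀ e ∈ c.edges, F e ≠ par (F e) := by
    intro e he h
    have := (hFspec e he).2.2
    rw [← h] at this; omega
  have hinj : ∀ e₁ ∈ c.edges, ∀ e₂ ∈ c.edges, F e₁ = F e₂ → e₁ = e₂ := by
    intro e₁ h₁ e₂ h₂ h
    obtain ⟨m1, m2, _⟩ := hFspec e₁ h₁
    obtain ⟨m1', m2', _⟩ := hFspec e₂ h₂
    rw [← h] at m1' m2'
    exact Sym2.eq_of_ne_mem (hFne e₁ h₁) m1 m2 m1' m2'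
  -- membership in support.tail
  have hmemsup : ∀ (x : V) (e : Sym2 V), e ∈ c.edges → x ∈ e → x ∈ c.support := by
    intro x e he hx
    induction e using Sym2.ind with
    | _ a b =>
      rcases Sym2.mem_iff.1 hx with rfl | rfl
      · exact c.fst_mem_support_of_mem_edges he
      · exact c.snd_mem_support_of_mem_edges he
  have htail : ∀ x ∈ c.support, x ∈ c.support.tail := by
    cases c with
    | nil =>
      rw [SimpleGraph.Walk.isCycle_def] at hc
      exact absurd rfl hc.2.1
    | cons h q =>
      intro y hy
      rw [SimpleGraph.Walk.support_cons] at hy ⊢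
      rw [List.tail_cons]
      rcases List.mem_cons.1 hy with rfl | hmem
      · exact q.end_mem_support
      · exact hmem
  -- Finset counting
  have hnde : c.edges.Nodup := hc.edges_nodup
  have hndt : c.support.tail.Nodup := hc.support_nodup
  have hcard1 : c.edges.toFinset.card = c.length := by
    rw [List.toFinset_card_of_nodup hnde, c.length_edges]
  have hcard2 : c.support.tail.toFinset.card = c.length := by
    rw [List.toFinset_card_of_nodup hndt]
    have h2 := c.length_support
    rw [c.support_eq_cons] at h2
    simpa using h2
  have himage : c.edges.toFinset.image F = c.support.tail.toFinset := by
    apply Finset.eq_of_subset_of_card_le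
    · intro x hx
      simp only [Finset.mem_image, List.mem_toFinset] at hx ⊢
      obtain ⟨e, he, rfl⟩ := hx
      exact htail _ (hmemsup _ e he (hFspec e he).1)
    · rw [hcard2, Finset.card_image_of_injOn, hcard1]
      intro e₁ h₁ e₂ h₂ h
      exact hinj e₁ (List.mem_toFinset.1 h₁) e₂ (List.mem_toFinset.1 h₂) h
  -- take min depth vertex
  have hne : c.support.tail.toFinset.Nonempty := by
    rw [← Finset.card_pos, hcard2]
    have := hc.three_le_length; omega
  obtain ⟨x, hx, hmin⟩ := Finset.exists_min_image c.support.tail.toFinset dep hne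
  rw [← himage] at hx
  obtain ⟨e, he, rfl⟩ := Finset.mem_image.1 hx
  have he' := List.mem_toFinset.1 he
  obtain ⟨m1, m2, hd⟩ := hFspec e he'
  have hpar : par (F e) ∈ c.support.tail.toFinset :=
    List.mem_toFinset.2 (htail _ (hmemsup _ e he' m2))
  have := hmin _ hpar
  omega



lemma tG_acyclic : (tG Δ).IsAcyclic := by
  apply acyclic_of_parent (parent) (depth)
  exact fun h => adj_parent h

lemma tG_isTree (hΔ : 0 < Δ) : (tG Δ).IsTree := ⟨tG_connected hΔ, tG_acyclic⟩

lemma star_upper (hΔ : 0 < Δ) : StarColorable (tG Δ) (3 * Δ / 2) := by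
  refine ⟨φ₀ Δ, ?_, ?_, ?_, ?_⟩
  · intro e he
    rcases edge_mem.mp he with ⟨i, rfl⟩ | ⟨i, j, rfl⟩
    · rw [φ₀_rt_ch]; have := i.isLt; omega
    · rw [φ₀_ch_lf]; have := col_lt hΔ i j; omega
  · rintro e1 he1 e2 he2 ⟨hne, x, hx1, hx2⟩
    rcases edge_mem.mp he1 with ⟨i, rfl⟩ | ⟨i, j, rfl⟩ <;>
      rcases edge_mem.mp he2 with ⟨i', rfl⟩ | ⟨i', j', rfl⟩
    · simp only [φ₀_rt_ch]
      intro h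
      exact hne (by rw [Fin.ext h])
    · rcases Sym2.mem_iff.mp hx1 with rfl | rfl <;> rcases Sym2.mem_iff.mp hx2 with h | h
      · simp [rt, ch] at h
      · simp [rt, lf] at h
      · obtain rfl : i = i' := ch_inj_iff.mp h
        simp only [φ₀_rt_ch, φ₀_ch_lf]
        exact (col_ne i j').symm
      · simp [ch, lf] at h
    · rcases Sym2.mem_iff.mp hx2 with rfl | rfl <;> rcases Sym2.mem_iff.mp hx1 with h | h
      · simp [rt, ch] at h
      · simp [rt, lf] at h
      · obtain rfl : i' = i := ch_inj_iff.mp h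
        simp only [φ₀_rt_ch, φ₀_ch_lf]
        exact col_ne i' j
      · simp [ch, lf] at h
    · rcases Sym2.mem_iff.mp hx1 with rfl | rfl <;> rcases Sym2.mem_iff.mp hx2 with h | h
      · obtain rfl : i = i' := ch_inj_iff.mp h
        simp only [φ₀_ch_lf]
        intro hcol
        obtain rfl := col_inj i hcol
        exact hne rfl
      · simp [ch, lf] at h
      · simp [ch, lf] at h
      · obtain ⟨rfl, rfl⟩ : i = i' ∧ j = j' := by
          have := lf_inj_iff.mp h
          exact ⟨this.1, this.2⟩
        exact absurd rfl hne
  · rintro u v p hp hl ⟨c1, c2, hc⟩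
    obtain ⟨i, i', j, j', hne, hedges⟩ := path4_struct p hp hl
    rw [hedges] at hc
    have g1 : col Δ i j = c1 ∨ col Δ i j = c2 := by
      have := hc s(lf Δ i j, ch Δ i) (by simp)
      rwa [Sym2.eq_swap, φ₀_ch_lf] at this
    have g2 : (i : ℕ) = c1 ∨ (i : ℕ) = c2 := by
      have := hc s(ch Δ i, rt Δ) (by simp)
      rwa [Sym2.eq_swap, φ₀_rt_ch] at this
    have g3 : (i' : ℕ) = c1 ∨ (i' : ℕ) = c2 := by
      have := hc s(rt Δ, ch Δ i') (by simp)
      rwa [φ₀_rt_ch] at this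
    have g4 : col Δ i' j' = c1 ∨ col Δ i' j' = c2 := by
      have := hc s(ch Δ i', lf Δ i' j') (by simp)
      rwa [φ₀_ch_lf] at this
    have hvne : (i : ℕ) ≠ (i' : ℕ) := fun hc' => hne (Fin.ext hc')
    have hcn1 := col_ne i j
    have hcn2 := col_ne i' j'
    rcases g2 with rfl | rfl <;> rcases g3 with h3 | h3 <;> rcases g1 with h1 | h1 <;>
      rcases g4 with h4 | h4 <;>
      first
        | exact hvne h3.symm
        | exact hcn1 h1
        | exact hcn2 (h4.trans h3.symm)
        | exact col_antisym hne (h1.trans h3.symm) h4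
        | exact col_antisym hne h1 h4
  · intro u p hcyc _
    exact absurd hcyc (tG_acyclic p)

lemma star_mono {k k' : ℕ} (h : StarColorable (tG Δ) k) (hkk : k ≤ k') :
    StarColorable (tG Δ) k' := by
  obtain ⟨φ, hφ, hs⟩ := h
  exact ⟨φ, fun e he => lt_of_lt_of_le (hφ e he) hkk, hs⟩

lemma star_lower (hΔ : 0 < Δ) : ¬ StarColorable (tG Δ) (3 * Δ / 2 - 1) := by
  rintro ⟨φ, hφ, hproper, hpath, -⟩
  rcases Nat.lt_or_ge Δ 2 with hΔ1 | hΔ2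
  · -- Δ = 1
    have h1 : Δ = 1 := by omega
    subst h1
    have := hφ s(rt 1, ch 1 ⟨0, by omega⟩) (edge_mem.mpr (Or.inl ⟨_, rfl⟩))
    omega
  -- Δ ≥ 2
  set K := 3 * Δ / 2 - 1 with hKdef
  set a : Fin Δ → ℕ := fun i => φ s(rt Δ, ch Δ i) with ha
  set b : Fin Δ → Fin (Δ - 1) → ℕ := fun i j => φ s(ch Δ i, lf Δ i j) with hb
  have hmem1 : ∀ i : Fin Δ, s(rt Δ, ch Δ i) ∈ (tG Δ).edgeSet :=
    fun i => edge_mem.mpr (Or.inl ⟨i, rfl⟩)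
  have hmem2 : ∀ (i : Fin Δ) (j : Fin (Δ - 1)), s(ch Δ i, lf Δ i j) ∈ (tG Δ).edgeSet :=
    fun i j => edge_mem.mpr (Or.inr ⟨i, j, rfl⟩)
  have ainj : Function.Injective a := by
    intro i i' h
    by_contra hne
    refine hproper _ (hmem1 i) _ (hmem1 i') ⟨?_, rt Δ, by simp, by simp⟩ h
    rw [ne_eq, Sym2.eq_iff]
    push_neg
    constructor
    · intro _; exact fun hc => hne (ch_inj_iff.mp hc)
    · intro hc; exact absurd hc (rt_ne_ch i')
  have binj : ∀ i : Fin Δ, Function.Injective (b i) := by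
    intro i j j' h
    by_contra hne
    refine hproper _ (hmem2 i j) _ (hmem2 i j') ⟨?_, ch Δ i, by simp, by simp⟩ h
    rw [ne_eq, Sym2.eq_iff]
    push_neg
    refine ⟨fun _ hc => ?_, fun hc => ?_⟩
    · exact hne ((lf_inj_iff.mp hc).2)
    · exact absurd hc (ch_ne_lf i i j')
  have hba : ∀ (i : Fin Δ) (j : Fin (Δ - 1)), b i j ≠ a i := by
    intro i j
    refine hproper _ (hmem2 i j) _ (hmem1 i) ⟨?_, ch Δ i, by simp, by simp⟩
    rw [ne_eq, Sym2.eq_iff]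
    push_neg
    exact ⟨fun hc => absurd hc (ch_ne_rt i), fun _ h2 => absurd h2 (lf_ne_rt i j)⟩
  have key : ∀ (i i' : Fin Δ), i ≠ i' → ∀ (j : Fin (Δ - 1)) (j' : Fin (Δ - 1)),
      ¬ (b i j = a i' ∧ b i' j' = a i) := by
    rintro i i' hne j j' ⟨hb1, hb2⟩
    let p : (tG Δ).Walk (lf Δ i j) (lf Δ i' j') :=
      Walk.cons ((adj_ch_lf i j).symm) (Walk.cons ((adj_rt_ch i).symm)
        (Walk.cons (adj_rt_ch i') (Walk.cons (adj_ch_lf i' j') Walk.nil)))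
    have hisp : p.IsPath := by
      rw [Walk.isPath_def]
      simp [p, Walk.support_cons, hne, Ne.symm hne]
    refine hpath _ _ p hisp (by simp [p]) ⟨a i, a i', ?_⟩
    intro e he
    simp only [p, Walk.edges_cons, Walk.edges_nil, List.mem_cons, List.not_mem_nil,
      or_false] at he
    rcases he with rfl | rfl | rfl | rfl
    · right; rwa [Sym2.eq_swap]
    · left; rw [Sym2.eq_swap]
    · right; rfl
    · left; exact hb2
  -- counting
  have haK : ∀ i, a i < K := fun i => hφ _ (hmem1 i)
  have hbK : ∀ i j, b i j < K := fun i j => hφ _ (hmem2 i j)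
  classical
  set A : Finset ℕ := Finset.univ.image a with hA
  have hAcard : A.card = Δ := by
    rw [hA, Finset.card_image_of_injective _ ainj]; simp
  have hAsub : A ⊆ Finset.range K := by
    intro x hx
    simp only [hA, Finset.mem_image] at hx
    obtain ⟨i, -, rfl⟩ := hx
    exact Finset.mem_range.mpr (haK i)
  set S : Fin Δ → Finset (Fin Δ) :=
    fun i => Finset.univ.filter (fun i' => i' ≠ i ∧ ∃ j, b i j = a i') with hS
  have hScard : ∀ i, Δ - Δ / 2 ≤ (S i).card := by
    intro i
    set Bf : Finset ℕ := Finset.univ.image (b i) with hBf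
    have hBcard : Bf.card = Δ - 1 := by
      rw [hBf, Finset.card_image_of_injective _ (binj i)]; simp
    have hBsub : Bf ⊆ Finset.range K := by
      intro x hx
      simp only [hBf, Finset.mem_image] at hx
      obtain ⟨j, -, rfl⟩ := hx
      exact Finset.mem_range.mpr (hbK i j)
    have h1 : Bf ∩ A ⊆ (S i).image a := by
      intro x hx
      obtain ⟨hxB, hxA⟩ := Finset.mem_inter.mp hx
      simp only [hBf, Finset.mem_image] at hxB
      obtain ⟨j, -, rfl⟩ := hxB
      simp only [hA, Finset.mem_image] at hxA
      obtain ⟨i', -, hi'⟩ := hxA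
      have hne : i' ≠ i := fun h => hba i j ((h ▸ hi').symm)
      refine Finset.mem_image.mpr ⟨i', ?_, hi'⟩
      simp only [hS, Finset.mem_filter, Finset.mem_univ, true_and]
      exact ⟨hne, j, hi'.symm⟩
    have h2 : (Bf ∩ A).card ≤ (S i).card :=
      le_trans (Finset.card_le_card h1) Finset.card_image_le
    have h3 : (Bf \ A).card ≤ K - Δ := by
      have hsub : Bf \ A ⊆ Finset.range K \ A := by
        exact Finset.sdiff_subset_sdiff hBsub (le_refl A)
      calc (Bf \ A).card ≤ (Finset.range K \ A).card := Finset.card_le_card hsub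
        _ = K - Δ := by rw [Finset.card_sdiff_of_subset hAsub, Finset.card_range, hAcard]
    have h4 := Finset.card_inter_add_card_sdiff Bf A
    omega
  have antisym : ∀ i i', i' ∈ S i → i ∈ S i' → False := by
    intro i i' h1 h2
    simp only [hS, Finset.mem_filter, Finset.mem_univ, true_and] at h1 h2
    obtain ⟨hne, j, hj⟩ := h1
    obtain ⟨-, j', hj'⟩ := h2
    exact key i i' (fun hc => hne (hc ▸ rfl)) j j' ⟨hj, hj'⟩
  set P : Finset (Fin Δ × Fin Δ) := Finset.univ.filter (fun q => q.2 ∈ S q.1) with hP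
  have hcardsum : ∀ i : Fin Δ, (S i).card = ∑ i' : Fin Δ, if i' ∈ S i then 1 else 0 := by
    intro i
    rw [← Finset.card_filter]
    congr 1
    rw [Finset.filter_mem_eq_inter, Finset.univ_inter]
  have hPcard : ∑ i : Fin Δ, (S i).card = P.card := by
    rw [hP, Finset.card_filter, Fintype.sum_prod_type]
    exact Finset.sum_congr rfl (fun i _ => hcardsum i)
  have hPle : Δ * (Δ - Δ / 2) ≤ P.card := by
    rw [← hPcard]
    calc Δ * (Δ - Δ / 2) = ∑ _i : Fin Δ, (Δ - Δ / 2) := by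
          rw [Finset.sum_const, Finset.card_univ, Fintype.card_fin, smul_eq_mul]
      _ ≤ ∑ i : Fin Δ, (S i).card := Finset.sum_le_sum (fun i _ => hScard i)
  set P' : Finset (Fin Δ × Fin Δ) := P.image Prod.swap with hP'
  have hP'card : P'.card = P.card := Finset.card_image_of_injective _ Prod.swap_injective
  have hdisj : Disjoint P P' := by
    rw [Finset.disjoint_left]
    rintro ⟨x, y⟩ hq hq'
    have h1 : y ∈ S x := by
      have := Finset.mem_filter.mp hq
      exact this.2
    obtain ⟨q, hqP, hqs⟩ := Finset.mem_image.mp hq'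
    have hqeq : q = (y, x) := by
      have h1' := congrArg Prod.fst hqs
      have h2' := congrArg Prod.snd hqs
      exact Prod.ext (by simpa using h2') (by simpa using h1')
    subst hqeq
    have h2 : x ∈ S y := (Finset.mem_filter.mp hqP).2
    exact antisym x y h1 h2
  have hsubdiag : P ∪ P' ⊆ Finset.univ.offDiag := by
    intro q hq
    rcases Finset.mem_union.mp hq with h | h
    · have h1 : q.2 ∈ S q.1 := (Finset.mem_filter.mp h).2
      have h2 : q.2 ≠ q.1 := (Finset.mem_filter.mp h1).2.1
      exact Finset.mem_offDiag.mpr ⟨Finset.mem_univ _, Finset.mem_univ _, fun hc => h2 hc.symm⟩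
    · obtain ⟨⟨u, w⟩, hmem, rfl⟩ := Finset.mem_image.mp h
      have hmem' : w ∈ S u := (Finset.mem_filter.mp hmem).2
      have hwne : w ≠ u := (Finset.mem_filter.mp hmem').2.1
      exact Finset.mem_offDiag.mpr ⟨Finset.mem_univ _, Finset.mem_univ _, hwne⟩
  have hoff : (Finset.univ.offDiag : Finset (Fin Δ × Fin Δ)).card = Δ * Δ - Δ := by
    rw [Finset.offDiag_card]
    simp
  have hfinal : P.card + P.card ≤ Δ * Δ - Δ := by
    calc P.card + P.card = (P ∪ P').card := by
          rw [Finset.card_union_of_disjoint hdisj, hP'card]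
      _ ≤ _ := Finset.card_le_card hsubdiag
      _ = Δ * Δ - Δ := hoff
  have hq2 : Δ ≤ 2 * (Δ - Δ / 2) := by omega
  have hm1 : Δ * Δ ≤ 2 * (Δ * (Δ - Δ / 2)) := by
    calc Δ * Δ ≤ Δ * (2 * (Δ - Δ / 2)) := Nat.mul_le_mul_left Δ hq2
      _ = 2 * (Δ * (Δ - Δ / 2)) := by ring
  have habs : ∀ M x cP : ℕ, M ≤ 2 * x → x ≤ cP → cP + cP + Δ ≤ M → 2 ≤ Δ → False := by
    intro M x cP hh1 hh2 hh3 hh4; omega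
  have hDleM : Δ ≤ Δ * Δ := Nat.le_mul_of_pos_left Δ (by omega)
  exact habs (Δ * Δ) (Δ * (Δ - Δ / 2)) P.card hm1 hPle (by omega) hΔ2

end TightTreeAux

theorem stmt_5 (Δ : ℕ) (hΔ : 0 < Δ) :
    ∃ (V : Type) (_ : Fintype V) (T : SimpleGraph V),
      T.IsTree ∧ T.maxDegree = Δ ∧ starChromaticIndex T = 3 * Δ / 2 := by
  refine ⟨TightTreeAux.TV Δ, inferInstance, TightTreeAux.tG Δ,
    TightTreeAux.tG_isTree hΔ, TightTreeAux.tG_maxDegree hΔ, ?_⟩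
  have hset : (3 * Δ / 2) ∈ {k | StarColorable (TightTreeAux.tG Δ) k} :=
    TightTreeAux.star_upper hΔ
  unfold starChromaticIndex
  refine le_antisymm (Nat.sInf_le hset) (le_csInf ⟨_, hset⟩ ?_)
  intro k hk
  simp only [Set.mem_setOf_eq] at hk
  by_contra hlt
  push_neg at hlt
  exact TightTreeAux.star_lower hΔ (TightTreeAux.star_mono hk (by omega))
end

section
/- If C is a cycle of length n with n ≥ 3 and n ≠ 5, then the list star chromatic index of C equals 3. -/
open SimpleGraph
open scoped Classical

section StarComb

/-! ### Combinatorial core: cyclic sequences avoiding bichromatic patterns -/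

def Good (n : ℕ) (c : ℕ → ℕ) : Prop :=
  ∀ j < n, c j ≠ c ((j+1)%n) ∧
    ¬(c j = c ((j+2)%n) ∧ c ((j+1)%n) = c ((j+3)%n))

lemma pickgen (S : Finset ℕ) (T : Finset ℕ) (hS : T.card < S.card) : ∃ x ∈ S, x ∉ T := by
  have h : 0 < (S \ T).card := by
    have h2 := Finset.card_sdiff_add_card (s := S) (t := T)
    have h3 := Finset.card_le_card (Finset.subset_union_left (s₁ := S) (s₂ := T))
    omega
  rcases Finset.card_pos.mp h with ⟨x, hx⟩
  rw [Finset.mem_sdiff] at hx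
  exact ⟨x, hx.1, hx.2⟩

lemma pick1 (S : Finset ℕ) (hS : 1 ≤ S.card) : ∃ x, x ∈ S := by
  have := pickgen S ∅ (by simpa using hS)
  simpa using this

lemma pick2 (S : Finset ℕ) (hS : 2 ≤ S.card) (a : ℕ) : ∃ x ∈ S, x ≠ a := by
  have h := pickgen S {a} (by simp; omega)
  simpa using h

lemma pick3 (S : Finset ℕ) (hS : 3 ≤ S.card) (a b : ℕ) : ∃ x ∈ S, x ≠ a ∧ x ≠ b := by
  have hc : ({a, b} : Finset ℕ).card < S.card := by
    have := Finset.card_insert_le a ({b} : Finset ℕ)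
    simp at this ⊢; omega
  have h := pickgen S {a, b} hc
  simpa [not_or] using h

lemma case3 (L : ℕ → Finset ℕ) (hL : ∀ j, 3 ≤ (L j).card) :
    ∃ c : ℕ → ℕ, (∀ j < 3, c j ∈ L j) ∧ Good 3 c := by
  obtain ⟨x0, hx0⟩ := pick1 (L 0) (by have := hL 0; omega)
  obtain ⟨x1, hx1, hx10⟩ := pick2 (L 1) (by have := hL 1; omega) x0
  obtain ⟨x2, hx2, hx20, hx21⟩ := pick3 (L 2) (hL 2) x0 x1
  refine ⟨fun j => if j = 0 then x0 else if j = 1 then x1 else x2, ?_, ?_⟩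
  · intro j hj; interval_cases j <;> simp [hx0, hx1, hx2]
  · intro j hj; interval_cases j <;> simp <;> omega

lemma case4 (L : ℕ → Finset ℕ) (hL : ∀ j, 3 ≤ (L j).card) :
    ∃ c : ℕ → ℕ, (∀ j < 4, c j ∈ L j) ∧ Good 4 c := by
  obtain ⟨x0, hx0⟩ := pick1 (L 0) (by have := hL 0; omega)
  obtain ⟨x2, hx2, hx20⟩ := pick2 (L 2) (by have := hL 2; omega) x0
  obtain ⟨x1, hx1, hx10, hx12⟩ := pick3 (L 1) (hL 1) x0 x2
  obtain ⟨x3, hx3, hx30, hx32⟩ := pick3 (L 3) (hL 3) x0 x2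
  refine ⟨fun j => if j = 0 then x0 else if j = 1 then x1 else if j = 2 then x2 else x3, ?_, ?_⟩
  · intro j hj; interval_cases j <;> simp [hx0, hx1, hx2, hx3]
  · intro j hj; interval_cases j <;> simp <;> omega

lemma greedy (L : ℕ → Finset ℕ) (hL : ∀ j, 3 ≤ (L j).card) (m : ℕ) :
    ∃ c : ℕ → ℕ, (∀ j, 2 ≤ j → j ≤ m → c j ∈ L j) ∧
      (∀ j, 3 ≤ j → j ≤ m → c j ≠ c (j-1)) ∧ (∀ j, 4 ≤ j → j ≤ m → c j ≠ c (j-2)) := by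
  induction m with
  | zero => exact ⟨fun _ => 0, by omega, by omega, by omega⟩
  | succ m ih =>
    obtain ⟨c, hmem, h1, h2⟩ := ih
    rcases Nat.lt_or_ge (m+1) 2 with hm | hm
    · exact ⟨fun _ => 0, by omega, by omega, by omega⟩
    rcases Nat.lt_or_ge (m+1) 3 with hm3 | hm3
    · obtain ⟨v, hv⟩ := pick1 (L (m+1)) (by have := hL (m+1); omega)
      refine ⟨Function.update c (m+1) v, ?_, by omega, by omega⟩
      intro j hj hj'
      have : j = m+1 := by omega
      subst this; simp [hv]
    · obtain ⟨v, hv, hv1, hv2⟩ := pick3 (L (m+1)) (hL (m+1)) (c m) (c (m-1))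
      refine ⟨Function.update c (m+1) v, ?_, ?_, ?_⟩
      · intro j hj hj'
        rcases Nat.lt_or_ge j (m+1) with h | h
        · rw [Function.update_of_ne (by omega)]; exact hmem j hj (by omega)
        · have : j = m+1 := by omega
          subst this; simp [hv]
      · intro j hj hj'
        rcases Nat.lt_or_ge j (m+1) with h | h
        · rw [Function.update_of_ne (by omega), Function.update_of_ne (by omega)]
          exact h1 j hj (by omega)
        · have : j = m+1 := by omega
          subst this
          rw [Function.update_self, Function.update_of_ne (by omega)]
          have : m + 1 - 1 = m := by omega
          rw [this]; exact hv1
      · intro j hj hj'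
        rcases Nat.lt_or_ge j (m+1) with h | h
        · rw [Function.update_of_ne (by omega), Function.update_of_ne (by omega)]
          exact h2 j hj (by omega)
        · have : j = m+1 := by omega
          subst this
          rw [Function.update_self, Function.update_of_ne (by omega)]
          have : m + 1 - 2 = m - 1 := by omega
          rw [this]; exact hv2

lemma cardpair_le (a b : ℕ) : ({a,b} : Finset ℕ).card ≤ 2 := by
  have := Finset.card_insert_le a ({b} : Finset ℕ); simp at this ⊢; omega

lemma card3_le (a b c : ℕ) : ({a,b,c} : Finset ℕ).card ≤ 3 := by
  have h1 := Finset.card_insert_le a ({b, c} : Finset ℕ)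
  have h2 := cardpair_le b c; omega

lemma card3_distinct (a b c : ℕ) (h : 3 ≤ ({a,b,c} : Finset ℕ).card) :
    a ≠ b ∧ a ≠ c ∧ b ≠ c := by
  refine ⟨?_, ?_, ?_⟩ <;> rintro rfl
  · have h2 := cardpair_le a c
    have := Finset.card_le_card (show ({a,a,c} : Finset ℕ) ⊆ {a,c} by intro z; simp; try tauto)
    omega
  · have h2 := cardpair_le a b
    have := Finset.card_le_card (show ({a,b,a} : Finset ℕ) ⊆ {a,b} by intro z; simp; try tauto)
    omega
  · have h2 := cardpair_le a b
    have := Finset.card_le_card (show ({a,b,b} : Finset ℕ) ⊆ {a,b} by intro z; simp; try tauto)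
    omega

lemma case6 (n : ℕ) (hn : 6 ≤ n) (L : ℕ → Finset ℕ) (hL : ∀ j, 3 ≤ (L j).card)
    (hne : L 0 ≠ L 1) :
    ∃ c : ℕ → ℕ, (∀ j < n, c j ∈ L j) ∧ Good n c := by
  obtain ⟨c, hmem, inv1, inv2⟩ := greedy L hL (n-1)
  obtain ⟨x, y, hx, hy, O1, O2, O3, O4, O5, O6⟩ :
      ∃ x y, x ∈ L 0 ∧ y ∈ L 1 ∧ x ≠ y ∧ ¬(x = c 2 ∧ y = c 3) ∧ y ≠ c 2 ∧
        x ≠ c (n-1) ∧ ¬(c (n-2) = x ∧ c (n-1) = y) ∧ ¬(c (n-1) = y ∧ x = c 2) := by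
    by_cases hA : ∃ y ∈ L 1, y ≠ c 2 ∧ y ≠ c 3 ∧ y ≠ c (n-1)
    · obtain ⟨y, hy, hy2, hy3, hyn⟩ := hA
      obtain ⟨x, hx, hx1, hx2⟩ := pick3 (L 0) (hL 0) (c (n-1)) y
      exact ⟨x, y, hx, hy, hx2, fun h => hy3 h.2, hy2, hx1,
        fun h => hyn h.2.symm, fun h => hyn h.1.symm⟩
    · push_neg at hA
      have hsub : L 1 ⊆ ({c 2, c 3, c (n-1)} : Finset ℕ) := by
        intro z hz
        simp only [Finset.mem_insert, Finset.mem_singleton]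
        by_contra h
        push_neg at h
        exact h.2.2 (hA z hz h.1 h.2.1)
      have hcard : 3 ≤ ({c 2, c 3, c (n-1)} : Finset ℕ).card :=
        le_trans (hL 1) (Finset.card_le_card hsub)
      have hle3 := card3_le (c 2) (c 3) (c (n-1))
      obtain ⟨d23, d2n, d3n⟩ := card3_distinct _ _ _ hcard
      have heq : L 1 = ({c 2, c 3, c (n-1)} : Finset ℕ) :=
        Finset.eq_of_subset_of_card_le hsub (by have := hL 1; omega)
      have hx0 : ∃ x ∈ L 0, x ∉ L 1 := by
        by_contra h
        push_neg at h
        refine hne (Finset.eq_of_subset_of_card_le h ?_)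
        rw [heq]; have := hL 0; omega
      obtain ⟨x, hx, hxn1⟩ := hx0
      have hx2 : x ≠ c 2 := fun h => hxn1 (by rw [heq, h]; simp)
      have hx3 : x ≠ c 3 := fun h => hxn1 (by rw [heq, h]; simp)
      have hxn : x ≠ c (n-1) := fun h => hxn1 (by rw [heq, h]; simp)
      have hy : c 3 ∈ L 1 := by rw [heq]; simp
      exact ⟨x, c 3, hx, hy, hx3, fun h => hx2 h.1, d23.symm, hxn,
        fun h => d3n (h.2.symm), fun h => d3n h.1.symm⟩
  set cc : ℕ → ℕ := fun j => if j = 0 then x else if j = 1 then y else c j with hcc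
  have v0 : cc 0 = x := rfl
  have v1 : cc 1 = y := rfl
  have vj : ∀ j, 2 ≤ j → cc j = c j := by
    intro j hj; simp only [hcc]; rw [if_neg (by omega), if_neg (by omega)]
  refine ⟨cc, ?_, ?_⟩
  · intro j hj
    rcases Nat.lt_or_ge j 2 with h | h
    · interval_cases j
      · exact v0 ▸ hx
      · exact v1 ▸ hy
    · rw [vj j h]; exact hmem j h (by omega)
  · intro j hj
    have m1 : ∀ k < n, k % n = k := fun k hk => Nat.mod_eq_of_lt hk
    have mn0 : n % n = 0 := Nat.mod_self n
    have mn1 : (n+1) % n = 1 := by rw [Nat.add_mod_left]; exact m1 1 (by omega)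
    have mn2 : (n+2) % n = 2 := by rw [Nat.add_mod_left]; exact m1 2 (by omega)
    rcases Nat.lt_or_ge j 2 with h2 | h2
    · interval_cases j
      · rw [m1 1 (by omega), m1 2 (by omega), m1 3 (by omega), v0, v1, vj 2 (by omega),
          vj 3 (by omega)]
        exact ⟨O1, O2⟩
      · rw [m1 2 (by omega), m1 3 (by omega), m1 4 (by omega), v1, vj 2 (by omega),
          vj 3 (by omega), vj 4 (by omega)]
        have h42 : c 4 ≠ c 2 := by have := inv2 4 (by omega) (by omega); simpa using this
        exact ⟨O3, fun h => h42 h.2.symm⟩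
    rcases Nat.lt_or_ge j (n-3) with h3 | h3
    · rw [m1 (j+1) (by omega), m1 (j+2) (by omega), m1 (j+3) (by omega),
        vj j h2, vj (j+1) (by omega), vj (j+2) (by omega), vj (j+3) (by omega)]
      have hP : c (j+1) ≠ c j := by
        have := inv1 (j+1) (by omega) (by omega)
        rwa [show j+1-1 = j by omega] at this
      have hQ : c (j+3) ≠ c (j+1) := by
        have := inv2 (j+3) (by omega) (by omega)
        rwa [show j+3-2 = j+1 by omega] at this
      exact ⟨hP.symm, fun h => hQ h.2.symm⟩
    rcases Nat.lt_or_ge j (n-2) with h4 | h4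
    · have hj3 : j = n-3 := by omega
      subst hj3
      rw [show n-3+1 = n-2 by omega, show n-3+2 = n-1 by omega, show n-3+3 = n by omega,
        m1 (n-2) (by omega), m1 (n-1) (by omega), mn0,
        vj (n-3) (by omega), vj (n-2) (by omega), vj (n-1) (by omega), v0]
      have hP : c (n-2) ≠ c (n-3) := by
        have := inv1 (n-2) (by omega) (by omega)
        rwa [show n-2-1 = n-3 by omega] at this
      have hQ : c (n-1) ≠ c (n-3) := by
        have := inv2 (n-1) (by omega) (by omega)
        rwa [show n-1-2 = n-3 by omega] at this
      exact ⟨hP.symm, fun h => hQ h.1.symm⟩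
    rcases Nat.lt_or_ge j (n-1) with h5 | h5
    · have hj4 : j = n-2 := by omega
      subst hj4
      rw [show n-2+1 = n-1 by omega, show n-2+2 = n by omega, show n-2+3 = n+1 by omega,
        m1 (n-1) (by omega), mn0, mn1, vj (n-2) (by omega), vj (n-1) (by omega), v0, v1]
      have hP : c (n-1) ≠ c (n-2) := by
        have := inv1 (n-1) (by omega) (by omega)
        rwa [show n-1-1 = n-2 by omega] at this
      exact ⟨hP.symm, O5⟩
    · have hj5 : j = n-1 := by omega
      subst hj5
      rw [show n-1+1 = n by omega, show n-1+2 = n+1 by omega, show n-1+3 = n+2 by omega,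
        mn0, mn1, mn2, vj (n-1) (by omega), v0, v1, vj 2 (by omega)]
      exact ⟨fun h => O4 h.symm, O6⟩

lemma transfer (n : ℕ) (hn : 1 ≤ n) (L : ℕ → Finset ℕ) (j0 : ℕ) (hj0 : j0 ≤ n)
    (h : ∃ c, (∀ j < n, c j ∈ L ((j + j0) % n)) ∧ Good n c) :
    ∃ c, (∀ j < n, c j ∈ L j) ∧ Good n c := by
  obtain ⟨c', hm, hg⟩ := h
  have key : ∀ j k : ℕ, (((j + k) % n) + (n - j0)) % n = (((j + (n - j0)) % n) + k) % n := by
    intro j k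
    rw [Nat.mod_add_mod, Nat.mod_add_mod]
    ring_nf
  refine ⟨fun j => c' ((j + (n - j0)) % n), ?_, ?_⟩
  · intro j hj
    have h1 := hm ((j + (n - j0)) % n) (Nat.mod_lt _ (by omega))
    rw [Nat.mod_add_mod] at h1
    rwa [show j + (n - j0) + j0 = j + n by omega, Nat.add_mod_right, Nat.mod_eq_of_lt hj] at h1
  · intro j hj
    have hj' : (j + (n - j0)) % n < n := Nat.mod_lt _ (by omega)
    have hg' := hg _ hj'
    have e1 := key j 1
    have e2 := key j 2
    have e3 := key j 3
    simp only [← e1, ← e2, ← e3] at hg'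
    exact hg'

def cValid (l : List ℕ) : Prop :=
  ∀ j < l.length, l.getD j 0 ≠ l.getD ((j+1) % l.length) 0 ∧
    ¬(l.getD j 0 = l.getD ((j+2) % l.length) 0 ∧
      l.getD ((j+1) % l.length) 0 = l.getD ((j+3) % l.length) 0)

lemma good_of_cValid (n : ℕ) (l : List ℕ) (hlen : l.length = n) (h : cValid l) :
    Good n (fun j => l.getD j 0) := by
  subst hlen; exact h

section Pattern
variable {a b c : ℕ} (hab : a ≠ b) (hac : a ≠ c) (hbc : b ≠ c)

include hab hac hbc

lemma base3 : cValid [a, b, c] := by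
  intro j hj
  simp only [List.length] at hj
  interval_cases j <;> simp [List.getD] <;> tauto

lemma base4 : cValid [a, b, c, b] := by
  intro j hj
  simp only [List.length] at hj
  interval_cases j <;> simp [List.getD] <;> tauto

lemma base8 : cValid [a, b, c, b, a, b, c, b] := by
  intro j hj
  simp only [List.length] at hj
  interval_cases j <;> simp [List.getD] <;> tauto

lemma ins (u : List ℕ) (h : cValid (a :: b :: c :: u)) :
    cValid (a :: b :: c :: a :: b :: c :: u) := by
  set l := a :: b :: c :: u with hl
  set m := l.length with hm
  have hm3 : 3 ≤ m := by simp [hm, hl] <;> omega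
  have hlen' : (a :: b :: c :: a :: b :: c :: u).length = m + 3 := by simp [hm, hl] <;> omega
  have habc : (a :: b :: c :: a :: b :: c :: u) = a :: b :: c :: l := by rw [hl]
  intro j hj
  rw [hlen'] at hj
  rw [hlen']
  rcases Nat.lt_or_ge j 3 with h3 | h3
  · have hlt : ∀ k ≤ 5, k % (m + 3) = k := fun k hk => Nat.mod_eq_of_lt (by omega)
    have g0 : (a :: b :: c :: a :: b :: c :: u).getD 0 0 = a := rfl
    have g1 : (a :: b :: c :: a :: b :: c :: u).getD 1 0 = b := rfl
    have g2 : (a :: b :: c :: a :: b :: c :: u).getD 2 0 = c := rfl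
    have g3 : (a :: b :: c :: a :: b :: c :: u).getD 3 0 = a := rfl
    have g4 : (a :: b :: c :: a :: b :: c :: u).getD 4 0 = b := rfl
    have g5 : (a :: b :: c :: a :: b :: c :: u).getD 5 0 = c := rfl
    interval_cases j <;>
      rw [hlt _ (by omega), hlt _ (by omega), hlt _ (by omega)] <;>
      simp [g0, g1, g2, g3, g4, g5] <;> try tauto
  · set i := j - 3 with hi
    have him : i < m := by omega
    have cl : ∀ k ≤ 3, (a :: b :: c :: a :: b :: c :: u).getD ((j + k) % (m+3)) 0
        = l.getD ((i + k) % m) 0 := by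
      intro k hk
      rcases Nat.lt_or_ge (i + k) m with hikm | hikm
      · rw [Nat.mod_eq_of_lt hikm, Nat.mod_eq_of_lt (show j + k < m + 3 by omega),
          show j + k = (i + k) + 3 by omega, habc]
        rfl
      · have ht : i + k - m < 3 := by omega
        have hR : (i + k) % m = i + k - m := by
          rw [Nat.mod_eq_sub_mod hikm]; exact Nat.mod_eq_of_lt (by omega)
        have hL : (j + k) % (m + 3) = i + k - m := by
          rw [Nat.mod_eq_sub_mod (show m + 3 ≤ j + k by omega),
            show j + k - (m + 3) = i + k - m by omega]
          exact Nat.mod_eq_of_lt (by omega)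
        rw [hL, hR]
        set t := i + k - m with htd
        interval_cases t <;> rw [hl] <;> rfl
    have cl0 : (a :: b :: c :: a :: b :: c :: u).getD j 0 = l.getD i 0 := by
      have := cl 0 (by omega)
      rwa [Nat.mod_eq_of_lt (show j + 0 < m + 3 by omega), Nat.mod_eq_of_lt (by omega),
        Nat.add_zero, Nat.add_zero] at this
    rw [cl0, cl 1 (by omega), cl 2 (by omega), cl 3 (by omega)]
    exact h i him

def TPat (a b c n : ℕ) : Prop :=
  ∃ u : List ℕ, (a::b::c::u).length = n ∧ cValid (a::b::c::u) ∧
    ∀ x ∈ (a::b::c::u), x = a ∨ x = b ∨ x = c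

lemma Tstep {n : ℕ} (h : TPat a b c n) : TPat a b c (n+3) := by
  obtain ⟨u, hlen, hval, hlet⟩ := h
  refine ⟨a::b::c::u, by simp at hlen ⊢; omega, ins hab hac hbc u hval, ?_⟩
  intro x hx
  simp at hx
  rcases hx with h|h|h|h|h|h|h <;> first | tauto | exact hlet x (by simp [h])

lemma Tall (n : ℕ) (hn : 3 ≤ n) (hn5 : n ≠ 5) : TPat a b c n := by
  induction n using Nat.strong_induction_on with
  | _ n ih =>
    rcases Nat.lt_or_ge n 9 with h9 | h9
    · interval_cases n
      · exact ⟨[], rfl, base3 hab hac hbc, by simp⟩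
      · exact ⟨[b], rfl, base4 hab hac hbc, by simp <;> tauto⟩
      · exact absurd rfl hn5
      · exact Tstep hab hac hbc (⟨[], rfl, base3 hab hac hbc, by simp⟩ : TPat a b c 3)
      · exact Tstep hab hac hbc
          (⟨[b], rfl, base4 hab hac hbc, by simp <;> tauto⟩ : TPat a b c 4)
      · exact ⟨[b,a,b,c,b], rfl, base8 hab hac hbc, by simp <;> tauto⟩
    · have := ih (n-3) (by omega) (by omega) (by omega)
      have h2 := Tstep hab hac hbc this
      rwa [show n - 3 + 3 = n by omega] at h2

end Pattern

theorem comb_main (n : ℕ) (hn : 3 ≤ n) (hn5 : n ≠ 5) (L : ℕ → Finset ℕ)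
    (hL : ∀ j, 3 ≤ (L j).card) :
    ∃ c : ℕ → ℕ, (∀ j < n, c j ∈ L j) ∧ Good n c := by
  rcases Nat.lt_or_ge n 6 with h6 | h6
  · interval_cases n
    · exact case3 L hL
    · exact case4 L hL
    · exact absurd rfl hn5
  by_cases hA : ∃ j0, j0 < n ∧ L j0 ≠ L ((j0 + 1) % n)
  · obtain ⟨j0, hj0, hne⟩ := hA
    apply transfer n (by omega) L j0 (by omega)
    have h0 : (0 + j0) % n = j0 := by rw [Nat.zero_add]; exact Nat.mod_eq_of_lt hj0
    have h1 : (1 + j0) % n = (j0 + 1) % n := by rw [Nat.add_comm]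
    apply case6 n h6 _ (fun j => hL _)
    rw [h0, h1]
    exact hne
  · push_neg at hA
    have hall : ∀ j < n, L j = L 0 := by
      intro j
      induction j with
      | zero => intro _; rfl
      | succ j ih =>
        intro hj
        have h1 := hA j (by omega)
        rw [Nat.mod_eq_of_lt (by omega)] at h1
        rw [← h1]; exact ih (by omega)
    obtain ⟨a, ha⟩ := pick1 (L 0) (by have := hL 0; omega)
    obtain ⟨b, hb, hba⟩ := pick2 (L 0) (by have := hL 0; omega) a
    obtain ⟨c, hc, hca, hcb⟩ := pick3 (L 0) (hL 0) a b
    obtain ⟨u, hlen, hval, hlet⟩ := Tall (Ne.symm hba) (Ne.symm hca) (Ne.symm hcb) n hn hn5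
    refine ⟨fun j => (a::b::c::u).getD j 0, ?_, good_of_cValid n _ hlen hval⟩
    intro j hj
    have hmem : (a::b::c::u).getD j 0 ∈ (a::b::c::u) := by
      rw [List.getD_eq_getElem _ _ (by rw [hlen]; omega)]
      exact List.getElem_mem _
    rw [hall j hj]
    rcases hlet _ hmem with h|h|h <;> simp only [h] <;> assumption

/-! ### Graph-side lemmas for the cycle graph -/

lemma mod_ne_helper {n a : ℕ} (hn : 3 ≤ n) (ha : a < n) : (a + 2) % n ≠ a := by
  rcases Nat.lt_or_ge (a + 2) n with h | h
  · rw [Nat.mod_eq_of_lt h]; omega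
  · rw [Nat.mod_eq_sub_mod h, Nat.mod_eq_of_lt (by omega)]; omega

lemma val_succ (m : ℕ) (j : Fin (m+3)) : (j + 1).val = (j.val + 1) % (m+3) := by
  rw [Fin.add_def, Fin.val_one]

lemma val_succ2 (m : ℕ) (j : Fin (m+3)) : (j + 1 + 1).val = (j.val + 2) % (m+3) := by
  rw [val_succ, val_succ, Nat.mod_add_mod]

lemma val_succ3 (m : ℕ) (j : Fin (m+3)) : (j + 1 + 1 + 1).val = (j.val + 3) % (m+3) := by
  rw [val_succ, val_succ2, Nat.mod_add_mod]

lemma two_ne (m : ℕ) (k : Fin (m+3)) (h : k = k + 1 + 1) : False := by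
  have := congrArg Fin.val h
  rw [val_succ2] at this
  exact mod_ne_helper (by omega) k.isLt this.symm

lemma rep_unique (m : ℕ) (j k : Fin (m+3)) (h : s(j, j+1) = s(k, k+1)) : j = k := by
  rw [Sym2.eq_iff] at h
  rcases h with ⟨h1, _⟩ | ⟨h1, h2⟩
  · exact h1
  · exfalso; apply two_ne m k; conv_lhs => rw [← h2, h1]

lemma adj_char (m : ℕ) (u v : Fin (m+3)) :
    (SimpleGraph.cycleGraph (m+3)).Adj u v ↔ (u = v + 1 ∨ v = u + 1) := by
  rw [SimpleGraph.cycleGraph_adj]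
  constructor
  · rintro (h | h)
    · left; rw [sub_eq_iff_eq_add] at h; rw [h]; exact add_comm _ _
    · right; rw [sub_eq_iff_eq_add] at h; rw [h]; exact add_comm _ _
  · rintro (h | h)
    · left; rw [sub_eq_iff_eq_add, h]; exact add_comm _ _
    · right; rw [sub_eq_iff_eq_add, h]; exact add_comm _ _

lemma edge_char (m : ℕ) (e : Sym2 (Fin (m+3))) (he : e ∈ (SimpleGraph.cycleGraph (m+3)).edgeSet) :
    ∃ j, e = s(j, j+1) := by
  induction e with
  | _ u v =>
    rw [SimpleGraph.mem_edgeSet, adj_char] at he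
    rcases he with h | h
    · exact ⟨v, by rw [h, Sym2.eq_swap]⟩
    · exact ⟨u, by rw [h]⟩

lemma chain3 (m : ℕ) (x y z : Fin (m+3)) (hxz : x ≠ z)
    (h1 : x = y + 1 ∨ y = x + 1) (h2 : y = z + 1 ∨ z = y + 1) :
    (x = y + 1 ∧ y = z + 1) ∨ (y = x + 1 ∧ z = y + 1) := by
  rcases h1 with d1 | d1 <;> rcases h2 with d2 | d2
  · exact Or.inl ⟨d1, d2⟩
  · exact absurd (d1.trans d2.symm) hxz
  · exact absurd (add_right_cancel (d1.symm.trans d2)) hxz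
  · exact Or.inr ⟨d1, d2⟩

noncomputable def phi (m : ℕ) (c : ℕ → ℕ) : Sym2 (Fin (m+3)) → ℕ :=
  fun e => if h : ∃ j : Fin (m+3), e = s(j, j+1) then c (h.choose).val else 0

lemma phi_spec (m : ℕ) (c : ℕ → ℕ) (j : Fin (m+3)) : phi m c s(j, j+1) = c j.val := by
  have hex : ∃ k : Fin (m+3), (s(j, j+1) : Sym2 (Fin (m+3))) = s(k, k+1) := ⟨j, rfl⟩
  rw [phi, dif_pos hex]
  have := hex.choose_spec
  rw [← rep_unique m j hex.choose this]

lemma phi_spec' (m : ℕ) (c : ℕ → ℕ) (j : Fin (m+3)) : phi m c s(j + 1, j) = c j.val := by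
  rw [Sym2.eq_swap]; exact phi_spec m c j

lemma final (m : ℕ) (c : ℕ → ℕ) (hg : Good (m+3) c) (t : Fin (m+3)) (γ1 γ2 : ℕ)
    (e0 : c t.val = γ1 ∨ c t.val = γ2)
    (e1 : c ((t.val+1) % (m+3)) = γ1 ∨ c ((t.val+1) % (m+3)) = γ2)
    (e2 : c ((t.val+2) % (m+3)) = γ1 ∨ c ((t.val+2) % (m+3)) = γ2)
    (e3 : c ((t.val+3) % (m+3)) = γ1 ∨ c ((t.val+3) % (m+3)) = γ2) : False := by
  obtain ⟨P0, Q0⟩ := hg t.val t.isLt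
  obtain ⟨P1, -⟩ := hg ((t.val+1) % (m+3)) (Nat.mod_lt _ (by omega))
  obtain ⟨P2, -⟩ := hg ((t.val+2) % (m+3)) (Nat.mod_lt _ (by omega))
  rw [Nat.mod_add_mod, (by omega : t.val+1+1 = t.val+2)] at P1
  rw [Nat.mod_add_mod, (by omega : t.val+2+1 = t.val+3)] at P2
  rcases e0 with f0 | f0 <;> rcases e1 with f1 | f1 <;> rcases e2 with f2 | f2 <;>
    rcases e3 with f3 | f3 <;> omega

end StarComb

theorem upper_main (m : ℕ) (hn5 : m + 3 ≠ 5) :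
    StarChoosable (SimpleGraph.cycleGraph (m+3)) 3 := by
  intro L hL
  have hedge : ∀ j : Fin (m+3),
      (s(j, j+1) : Sym2 (Fin (m+3))) ∈ (SimpleGraph.cycleGraph (m+3)).edgeSet := by
    intro j
    rw [SimpleGraph.mem_edgeSet, adj_char]
    right; rfl
  set Ls : ℕ → Finset ℕ :=
    fun j => if h : j < m+3 then L (s((⟨j, h⟩ : Fin (m+3)), ⟨j, h⟩ + 1)) else {0,1,2} with hLs
  have hLs3 : ∀ j, 3 ≤ (Ls j).card := by
    intro j
    by_cases h : j < m+3
    · simp only [hLs, dif_pos h]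
      exact hL _ (hedge _)
    · simp only [hLs, dif_neg h]
      decide
  obtain ⟨c, hcm, hg⟩ := comb_main (m+3) (by omega) hn5 Ls hLs3
  refine ⟨phi m c, ?_, ?_, ?_, ?_⟩
  · -- membership
    intro e he
    obtain ⟨j, rfl⟩ := edge_char m e he
    rw [phi_spec]
    have h1 := hcm j.val j.isLt
    simp only [hLs, dif_pos j.isLt] at h1
    simpa using h1
  · -- properness
    intro e1 he1 e2 he2 hadj
    obtain ⟨j, rfl⟩ := edge_char m e1 he1
    obtain ⟨k, rfl⟩ := edge_char m e2 he2
    obtain ⟨hne, v, hv1, hv2⟩ := hadj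
    rw [phi_spec, phi_spec]
    have hjk : j ≠ k := fun h => hne (by rw [h])
    rw [Sym2.mem_iff] at hv1 hv2
    rcases hv1 with h1 | h1 <;> rcases hv2 with h2 | h2
    · exact absurd (h1.symm.trans h2) hjk
    · have hj : j = k + 1 := h1.symm.trans h2
      rw [hj, val_succ]
      exact ((hg k.val k.isLt).1).symm
    · have hk : k = j + 1 := h2.symm.trans h1
      rw [hk, val_succ]
      exact (hg j.val j.isLt).1
    · exact absurd (add_right_cancel ((h1.symm.trans h2 : (j+1 : Fin (m+3)) = k+1))) hjk
  · -- no bichromatic path of length 4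
    intro u v p hp hl hex
    obtain ⟨γ1, γ2, hbi⟩ := hex
    rcases p with _ | ⟨h1, p⟩
    · simp at hl
    rename_i b1
    rcases p with _ | ⟨h2, p⟩
    · simp at hl
    rename_i b2
    rcases p with _ | ⟨h3, p⟩
    · simp at hl
    rename_i b3
    rcases p with _ | ⟨h4, p⟩
    · simp at hl
    rename_i b4
    rcases p with _ | ⟨h5, p⟩
    case _ =>
      have hnd := hp.support_nodup
      simp [SimpleGraph.Walk.support_cons] at hnd
      obtain ⟨⟨n01, n02, n03, n0v⟩, ⟨n12, n13, n1v⟩, ⟨n23, n2v⟩, n3v⟩ := hnd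
      have S1 := chain3 m u b1 b2 n02 ((adj_char m u b1).mp h1) ((adj_char m b1 b2).mp h2)
      have S2 := chain3 m b1 b2 b3 n13 ((adj_char m b1 b2).mp h2) ((adj_char m b2 b3).mp h3)
      have S3 := chain3 m b2 b3 v n2v ((adj_char m b2 b3).mp h3) ((adj_char m b3 v).mp h4)
      have E0 := hbi s(u,b1) (by simp [SimpleGraph.Walk.edges_cons])
      have E1 := hbi s(b1,b2) (by simp [SimpleGraph.Walk.edges_cons])
      have E2 := hbi s(b2,b3) (by simp [SimpleGraph.Walk.edges_cons])
      have E3 := hbi s(b3,v) (by simp [SimpleGraph.Walk.edges_cons])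
      rcases S1 with ⟨d1, d2⟩ | ⟨d1, d2⟩ <;> rcases S2 with ⟨d2', d3⟩ | ⟨d2', d3⟩ <;>
        rcases S3 with ⟨d3', d4⟩ | ⟨d3', d4⟩
      · -- desc desc desc
        rw [d1] at E0
        rw [phi_spec', d2, d3, d4, val_succ3] at E0
        rw [d2] at E1
        rw [phi_spec', d3, d4, val_succ2] at E1
        rw [d3] at E2
        rw [phi_spec', d4, val_succ] at E2
        rw [d4] at E3
        rw [phi_spec'] at E3
        exact final m c hg v γ1 γ2 E3 E2 E1 E0
      · exact absurd (two_ne m b3 (d3'.trans (by rw [d3]))) id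
      · exact absurd (two_ne m b2 (d2'.trans (by rw [d2]))) id
      · exact absurd (two_ne m b2 (d2'.trans (by rw [d2]))) id
      · exact absurd (two_ne m b1 (d2'.trans (by rw [d2]))) id
      · exact absurd (two_ne m b1 (d2'.trans (by rw [d2]))) id
      · exact absurd (two_ne m b2 (d3'.trans (by rw [d3]))) id
      · -- asc asc asc
        rw [d1] at E0
        rw [phi_spec] at E0
        rw [d2] at E1
        rw [phi_spec, d1, val_succ] at E1
        rw [d3] at E2
        rw [phi_spec, d2, d1, val_succ2] at E2
        rw [d4] at E3
        rw [phi_spec, d3, d2, d1, val_succ3] at E3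
        exact final m c hg u γ1 γ2 E0 E1 E2 E3
    · simp at hl
  · -- no bichromatic cycle of length 4
    intro u p hp hl hex
    obtain ⟨γ1, γ2, hbi⟩ := hex
    rcases p with _ | ⟨h1, p⟩
    · simp at hl
    rename_i b1
    rcases p with _ | ⟨h2, p⟩
    · simp at hl
    rename_i b2
    rcases p with _ | ⟨h3, p⟩
    · simp at hl
    rename_i b3
    rcases p with _ | ⟨h4, p⟩
    · simp at hl
    rename_i b4
    rcases p with _ | ⟨h5, p⟩
    case _ =>
      have hnd := hp.support_nodup
      simp [SimpleGraph.Walk.support_cons] at hnd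
      obtain ⟨⟨n12, n13, n1u⟩, ⟨n23, n2u⟩, n3u⟩ := hnd
      have hu2 : u ≠ b2 := fun h => n2u h.symm
      have S1 := chain3 m u b1 b2 hu2 ((adj_char m u b1).mp h1) ((adj_char m b1 b2).mp h2)
      have S2 := chain3 m b1 b2 b3 n13 ((adj_char m b1 b2).mp h2) ((adj_char m b2 b3).mp h3)
      have S3 := chain3 m b2 b3 u hu2.symm ((adj_char m b2 b3).mp h3) ((adj_char m b3 u).mp h4)
      have E0 := hbi s(u,b1) (by simp [SimpleGraph.Walk.edges_cons])
      have E1 := hbi s(b1,b2) (by simp [SimpleGraph.Walk.edges_cons])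
      have E2 := hbi s(b2,b3) (by simp [SimpleGraph.Walk.edges_cons])
      have E3 := hbi s(b3,u) (by simp [SimpleGraph.Walk.edges_cons])
      rcases S1 with ⟨d1, d2⟩ | ⟨d1, d2⟩ <;> rcases S2 with ⟨d2', d3⟩ | ⟨d2', d3⟩ <;>
        rcases S3 with ⟨d3', d4⟩ | ⟨d3', d4⟩
      · -- desc desc desc
        rw [d1] at E0
        rw [phi_spec', d2, d3, d4, val_succ3] at E0
        rw [d2] at E1
        rw [phi_spec', d3, d4, val_succ2] at E1
        rw [d3] at E2
        rw [phi_spec', d4, val_succ] at E2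
        rw [d4] at E3
        rw [phi_spec'] at E3
        exact final m c hg u γ1 γ2 E3 E2 E1 E0
      · exact absurd (two_ne m b3 (d3'.trans (by rw [d3]))) id
      · exact absurd (two_ne m b2 (d2'.trans (by rw [d2]))) id
      · exact absurd (two_ne m b2 (d2'.trans (by rw [d2]))) id
      · exact absurd (two_ne m b1 (d2'.trans (by rw [d2]))) id
      · exact absurd (two_ne m b1 (d2'.trans (by rw [d2]))) id
      · exact absurd (two_ne m b2 (d3'.trans (by rw [d3]))) id
      · -- asc asc asc
        rw [d1] at E0
        rw [phi_spec] at E0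
        rw [d2] at E1
        rw [phi_spec, d1, val_succ] at E1
        rw [d3] at E2
        rw [phi_spec, d2, d1, val_succ2] at E2
        rw [d4] at E3
        rw [phi_spec, d3, d2, d1, val_succ3] at E3
        exact final m c hg u γ1 γ2 E0 E1 E2 E3
    · simp at hl


theorem lower_main (n : ℕ) (hn : 3 ≤ n) : ¬ StarChoosable (SimpleGraph.cycleGraph n) 2 := by
  obtain ⟨m, rfl⟩ : ∃ m, n = m + 3 := ⟨n - 3, by omega⟩
  intro hch
  obtain ⟨φ, hmem, hprop, hpath, hcyc⟩ :=
    hch (fun _ => ({0,1} : Finset ℕ))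
      (fun e _ => (by decide : (2:ℕ) ≤ ({0,1} : Finset ℕ).card))
  have hφ : ∀ e ∈ (SimpleGraph.cycleGraph (m+3)).edgeSet, φ e = 0 ∨ φ e = 1 := by
    intro e he
    have := hmem e he
    simpa using this
  have hadj : ∀ (i : ℕ) (h1 : i < m+3) (h2 : i+1 < m+3),
      (SimpleGraph.cycleGraph (m+3)).Adj ⟨i,h1⟩ ⟨i+1,h2⟩ := by
    intro i h1 h2
    rw [adj_char]; right; apply Fin.ext; rw [val_succ]; simp [Nat.mod_eq_of_lt h2]
  rcases Nat.lt_or_ge m 1 with hm | hm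
  · -- m = 0 : triangle
    interval_cases m
    have he01 : (s(0,1) : Sym2 (Fin 3)) ∈ (SimpleGraph.cycleGraph 3).edgeSet := by decide
    have he12 : (s(1,2) : Sym2 (Fin 3)) ∈ (SimpleGraph.cycleGraph 3).edgeSet := by decide
    have he20 : (s(2,0) : Sym2 (Fin 3)) ∈ (SimpleGraph.cycleGraph 3).edgeSet := by decide
    have d1 := hprop _ he01 _ he12
      ⟨by decide, 1, Sym2.mem_iff.mpr (Or.inr rfl), Sym2.mem_iff.mpr (Or.inl rfl)⟩
    have d2 := hprop _ he12 _ he20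
      ⟨by decide, 2, Sym2.mem_iff.mpr (Or.inr rfl), Sym2.mem_iff.mpr (Or.inl rfl)⟩
    have d3 := hprop _ he01 _ he20
      ⟨by decide, 0, Sym2.mem_iff.mpr (Or.inl rfl), Sym2.mem_iff.mpr (Or.inr rfl)⟩
    have f1 := hφ _ he01
    have f2 := hφ _ he12
    have f3 := hφ _ he20
    omega
  rcases Nat.lt_or_ge m 2 with hm2 | hm2
  · -- m = 1 : the 4-cycle
    interval_cases m
    have ha01 : (SimpleGraph.cycleGraph 4).Adj 0 1 := by decide
    have ha12 : (SimpleGraph.cycleGraph 4).Adj 1 2 := by decide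
    have ha23 : (SimpleGraph.cycleGraph 4).Adj 2 3 := by decide
    have ha30 : (SimpleGraph.cycleGraph 4).Adj 3 0 := by decide
    set w : (SimpleGraph.cycleGraph 4).Walk 0 0 :=
      SimpleGraph.Walk.cons ha01 (SimpleGraph.Walk.cons ha12
        (SimpleGraph.Walk.cons ha23 (SimpleGraph.Walk.cons ha30 SimpleGraph.Walk.nil))) with hw
    have hcycle : w.IsCycle := by
      rw [SimpleGraph.Walk.isCycle_def, hw]
      refine ⟨?_, by simp, ?_⟩
      · rw [SimpleGraph.Walk.isTrail_def]
        simp only [SimpleGraph.Walk.edges_cons, SimpleGraph.Walk.edges_nil]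
        decide
      · simp only [SimpleGraph.Walk.support_cons, SimpleGraph.Walk.support_nil, List.tail_cons]
        decide
    refine hcyc 0 w hcycle (by rw [hw]; simp) ⟨0, 1, ?_⟩
    intro e he
    exact hφ e (SimpleGraph.Walk.edges_subset_edgeSet w he)
  · -- m ≥ 2 : path of length 4
    set w : (SimpleGraph.cycleGraph (m+3)).Walk ⟨0, by omega⟩ ⟨4, by omega⟩ :=
      SimpleGraph.Walk.cons (hadj 0 (by omega) (by omega))
        (SimpleGraph.Walk.cons (hadj 1 (by omega) (by omega))
          (SimpleGraph.Walk.cons (hadj 2 (by omega) (by omega))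
            (SimpleGraph.Walk.cons (hadj 3 (by omega) (by omega)) SimpleGraph.Walk.nil))) with hw
    have hp : w.IsPath := by
      rw [SimpleGraph.Walk.isPath_def, hw]
      simp only [SimpleGraph.Walk.support_cons, SimpleGraph.Walk.support_nil]
      simp [SimpleGraph.Walk.support_cons, Fin.ext_iff]
    refine hpath _ _ w hp (by rw [hw]; rfl) ⟨0, 1, ?_⟩
    intro e he
    exact hφ e (SimpleGraph.Walk.edges_subset_edgeSet w he)


theorem choosable_mono {V : Type*} (G : SimpleGraph V) {k k' : ℕ} (h : k ≤ k')
    (hc : StarChoosable G k) : StarChoosable G k' := by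
  intro L hL
  exact hc L (fun e he => le_trans h (hL e he))

theorem stmt_6 (n : ℕ) (hn : 3 ≤ n) (hn5 : n ≠ 5) :
    listStarChromaticIndex (SimpleGraph.cycleGraph n) = 3 := by
  obtain ⟨m, rfl⟩ : ∃ m, n = m + 3 := ⟨n - 3, by omega⟩
  have hup : StarChoosable (SimpleGraph.cycleGraph (m+3)) 3 := upper_main m hn5
  have hlow := lower_main (m+3) (by omega)
  rw [listStarChromaticIndex]
  apply le_antisymm
  · exact Nat.sInf_le hup
  · have hne : {k | StarChoosable (SimpleGraph.cycleGraph (m+3)) k}.Nonempty := ⟨3, hup⟩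
    apply le_csInf hne
    intro k hk
    by_contra hlt
    push_neg at hlt
    exact hlow (choosable_mono _ (by omega) hk)
end

section
/- If P is a path (tree with maximum degree 2) with at least one edge, then ch'_star(P) ≤ ⌊(θ(P) + Δ(P))/2⌋, where θ(P) is the maximum Ore-degree. -/
open SimpleGraph
open scoped Classical

/-- edges at distance at most 2 along a path -/
def Near {V : Type*} (G : SimpleGraph V) (e f : Sym2 V) : Prop :=
  e ≠ f ∧ ((∃ v, v ∈ e ∧ v ∈ f) ∨ ∃ g ∈ G.edgeSet, EdgeAdj e g ∧ EdgeAdj g f)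

lemma Near.symm' {V : Type*} {G : SimpleGraph V} {e f : Sym2 V} (h : Near G e f) :
    Near G f e := by
  obtain ⟨hne, hc⟩ := h
  refine ⟨hne.symm, ?_⟩
  rcases hc with ⟨v, hv1, hv2⟩ | ⟨g, hg, ⟨h1, w1, hw1, hw1'⟩, ⟨h2, w2, hw2, hw2'⟩⟩
  · exact Or.inl ⟨v, hv2, hv1⟩
  · exact Or.inr ⟨g, hg, ⟨h2.symm, w2, hw2', hw2⟩, ⟨h1.symm, w1, hw1', hw1⟩⟩

lemma reach_closed {V : Type*} {G : SimpleGraph V} (S : Set V)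
    (hcl : ∀ a ∈ S, ∀ b, G.Adj a b → b ∈ S) {x w : V} (p : G.Walk x w) :
    x ∈ S → w ∈ S := by
  induction p with
  | nil => exact id
  | cons h q ih => exact fun hx => ih (hcl _ hx _ h)

lemma exists_leaf {V : Type*} [Fintype V] {G : SimpleGraph V} (hac : G.IsAcyclic)
    {x y : V} (hxy : G.Adj x y) : ∃ u v, G.Adj u v ∧ G.degree v = 1 := by
  classical
  set S : Set ℕ := {n | ∃ a b : V, ∃ p : G.Walk a b, p.IsPath ∧ p.length = n} with hS
  have h1S : (1 : ℕ) ∈ S := ⟨x, y, Walk.cons hxy Walk.nil, by simp [hxy.ne], by simp⟩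
  have hbdd : BddAbove S := ⟨Fintype.card V, by
    rintro n ⟨a, b, p, hp, rfl⟩; exact le_of_lt hp.length_lt⟩
  obtain ⟨a, b, p, hp, hlen⟩ := Nat.sSup_mem ⟨1, h1S⟩ hbdd
  have h1 : 1 ≤ sSup S := le_csSup hbdd h1S
  cases p with
  | nil => rw [Walk.length_nil] at hlen; omega
  | cons h q =>
    rename_i c
    -- h : G.Adj a c, q : G.Walk c b
    rw [Walk.cons_isPath_iff] at hp
    obtain ⟨hq, haq⟩ := hp
    refine ⟨c, a, h.symm, ?_⟩
    have hnb : G.neighborFinset a = {c} := by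
      ext z
      simp only [mem_neighborFinset, Finset.mem_singleton]
      constructor
      · intro hz
        by_contra hzc
        by_cases hzs : z ∈ (Walk.cons h q).support
        · have hza : z ≠ a := hz.ne'
          have hzq : z ∈ q.support := by
            rcases (Walk.mem_support_iff _).mp hzs with h' | h'
            · exact absurd h' hza
            · exact h'
          -- two paths from a to z
          have htp : ((Walk.cons h q).takeUntil z hzs).IsPath :=
            ((Walk.cons_isPath_iff _ _).mpr ⟨hq, haq⟩).takeUntil hzs
          have := isAcyclic_iff_path_unique.mp hac ⟨_, htp⟩ (Path.singleton hz)
          have hedge : s(a, z) ∈ ((Walk.cons h q).takeUntil z hzs).edges := by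
            have : ((Walk.cons h q).takeUntil z hzs : G.Walk a z)
                = (Path.singleton hz : G.Path a z) := by
              exact congrArg Subtype.val this
            rw [this]
            simp [Path.singleton]
          have hedge' := Walk.edges_takeUntil_subset _ hzs hedge
          rw [Walk.edges_cons] at hedge'
          rcases List.mem_cons.mp hedge' with h' | h'
          · rw [Sym2.eq_iff] at h'
            rcases h' with ⟨-, rfl⟩ | ⟨rfl, rfl⟩
            · exact hzc rfl
            · exact hza rfl
          · exact haq (Walk.fst_mem_support_of_mem_edges q h')
        · -- extend the path
          have hext : (Walk.cons hz.symm (Walk.cons h q)).IsPath :=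
            (Walk.cons_isPath_iff _ _).mpr ⟨(Walk.cons_isPath_iff _ _).mpr ⟨hq, haq⟩, hzs⟩
          have : (Walk.cons hz.symm (Walk.cons h q)).length ∈ S :=
            ⟨z, b, _, hext, rfl⟩
          have hle := le_csSup hbdd this
          simp only [Walk.length_cons] at hle hlen
          omega
      · rintro rfl; exact h
    rw [← card_neighborFinset_eq_degree, hnb, Finset.card_singleton]

lemma greedy_s14 {V : Type*} [Fintype V] :
    ∀ (n : ℕ) (G : SimpleGraph V), G.edgeFinset.card = n → G.IsAcyclic →
    (∀ v, G.degree v ≤ 2) → ∀ L : Sym2 V → Finset ℕ, (∀ e ∈ G.edgeSet, 3 ≤ (L e).card) →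
    ∃ φ : Sym2 V → ℕ, (∀ e ∈ G.edgeSet, φ e ∈ L e) ∧
      ∀ e ∈ G.edgeSet, ∀ f ∈ G.edgeSet, Near G e f → φ e ≠ φ f := by
  intro n
  induction n using Nat.strong_induction_on with
  | _ n ih =>
  intro G hcard hac hdeg L hL
  rcases Nat.eq_zero_or_pos n with rfl | hpos
  · have hempty : ∀ e, e ∉ G.edgeSet := by
      intro e he
      have : e ∈ G.edgeFinset := mem_edgeFinset.mpr he
      simp [Finset.card_eq_zero.mp hcard] at this
    exact ⟨fun _ => 0, fun e he => absurd he (hempty e), fun e he => absurd he (hempty e)⟩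
  · -- get an edge, then a leaf
    obtain ⟨e₀, he₀⟩ := Finset.card_pos.mp (hcard ▸ hpos)
    have he₀' : e₀ ∈ G.edgeSet := mem_edgeFinset.mp he₀
    obtain ⟨u, v, huv, hdv⟩ : ∃ u v, G.Adj u v ∧ G.degree v = 1 := by
      induction e₀ using Sym2.ind with
      | _ x y => exact exists_leaf hac (G.mem_edgeSet.mp he₀')
    set e : Sym2 V := s(u, v) with he_def
    have he : e ∈ G.edgeSet := G.mem_edgeSet.mpr huv
    set G' := G.deleteEdges {e} with hG'def
    have hle : G' ≤ G := G.deleteEdges_le _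
    have hES : G'.edgeSet = G.edgeSet \ {e} := G.edgeSet_deleteEdges _
    have hEF : G'.edgeFinset = G.edgeFinset.erase e := by
      ext f
      simp only [mem_edgeFinset, hES, Set.mem_diff, Set.mem_singleton_iff,
        Finset.mem_erase]
      tauto
    have hcard' : G'.edgeFinset.card = n - 1 := by
      rw [hEF, Finset.card_erase_of_mem (mem_edgeFinset.mpr he), hcard]
    have hac' : G'.IsAcyclic := fun w c hc => hac (c.mapLe hle) (hc.mapLe _)
    have hdeg' : ∀ w, G'.degree w ≤ 2 := by
      intro w
      refine le_trans (Finset.card_le_card ?_) (hdeg w)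
      intro z hz
      rw [mem_neighborFinset] at hz ⊢
      exact hle hz
    have hL' : ∀ f ∈ G'.edgeSet, 3 ≤ (L f).card := fun f hf => hL f (hES ▸ hf).1
    obtain ⟨φ', hmem', hprop'⟩ := ih (n - 1) (by omega) G' (by convert hcard') hac' (by convert hdeg') L hL'
    -- v is a leaf: its unique neighbor is u
    have hnbv : ∀ z, G.Adj v z → z = u := by
      intro z hz
      have hcv : (G.neighborFinset v).card ≤ 1 := le_of_eq hdv
      exact Finset.card_le_one.mp hcv z (by rw [mem_neighborFinset]; exact hz)
        u (by rw [mem_neighborFinset]; exact huv.symm)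
    -- any edge ≠ e sharing a vertex with e is of the form s(u,y), y ≠ v
    have hshare : ∀ f ∈ G.edgeSet, f ≠ e → (∃ w, w ∈ e ∧ w ∈ f) →
        ∃ y, G.Adj u y ∧ y ≠ v ∧ f = s(u, y) := by
      intro f hf hne hw
      induction f using Sym2.ind with
      | _ p q =>
        obtain ⟨w, hwe, hwf⟩ := hw
        have hpq : G.Adj p q := G.mem_edgeSet.mp hf
        have huv' : w = u ∨ w = v := Sym2.mem_iff.mp hwe
        have hfpq : w = p ∨ w = q := Sym2.mem_iff.mp hwf
        rcases huv' with rfl | rfl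
        · -- w = u
          rcases hfpq with rfl | rfl
          · refine ⟨q, hpq, fun hq => hne ?_, rfl⟩
            rw [hq]
          · refine ⟨p, hpq.symm, fun hp => hne ?_, Sym2.eq_swap⟩
            rw [hp, Sym2.eq_swap]
        · -- w = v : other endpoint must be u, so f = e, contradiction
          exfalso
          rcases hfpq with rfl | rfl
          · have := hnbv q hpq
            subst this
            exact hne (Sym2.eq_swap)
          · have := hnbv p hpq.symm
            subst this
            exact hne rfl
    have key : ∀ f ∈ G.edgeSet, Near G e f → ∃ y, G.Adj u y ∧ y ≠ v ∧ y ∈ f := by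
      rintro f hf ⟨hne, hcase⟩
      rcases hcase with hsh | ⟨g, hg, ⟨hneg, w1, hw1e, hw1g⟩, ⟨hnegf, w2, hw2g, hw2f⟩⟩
      · obtain ⟨y, hy1, hy2, rfl⟩ := hshare f hf (Ne.symm hne)
          (by obtain ⟨w, h1, h2⟩ := hsh; exact ⟨w, h1, h2⟩)
        exact ⟨y, hy1, hy2, Sym2.mem_mk_right _ _⟩
      · obtain ⟨y, hy1, hy2, rfl⟩ := hshare g hg (Ne.symm hneg) ⟨w1, hw1e, hw1g⟩
        rcases Sym2.mem_iff.mp hw2g with hw | hw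
        · -- w2 = u, so u ∈ f
          obtain ⟨y', hy1', hy2', rfl⟩ := hshare f hf (Ne.symm hne)
            ⟨u, Sym2.mem_mk_left _ _, hw ▸ hw2f⟩
          exact ⟨y', hy1', hy2', Sym2.mem_mk_right _ _⟩
        · exact ⟨y, hy1, hy2, hw ▸ hw2f⟩
    -- bound forbidden edges
    obtain ⟨forb, hforbcard, hforb⟩ : ∃ forb : Finset (Sym2 V), forb.card ≤ 2 ∧
        ∀ f ∈ G.edgeSet, Near G e f → f ∈ forb := by
      by_cases hex : ∃ y, G.Adj u y ∧ y ≠ v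
      · obtain ⟨y, huy, hyv⟩ := hex
        have huniq : ∀ y', G.Adj u y' → y' ≠ v → y' = y := by
          intro y' hy' hy'v
          by_contra hyy
          have hsub : ({v, y, y'} : Finset V) ⊆ G.neighborFinset u := by
            intro z hz
            simp only [Finset.mem_insert, Finset.mem_singleton] at hz
            rcases hz with rfl | rfl | rfl
            · rw [mem_neighborFinset]; exact huv
            · rw [mem_neighborFinset]; exact huy
            · rw [mem_neighborFinset]; exact hy'
          have hc3 : ({v, y, y'} : Finset V).card = 3 := by
            rw [Finset.card_insert_of_notMem (by simp [Ne.symm hyv, Ne.symm hy'v]),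
              Finset.card_insert_of_notMem (by simp [Ne.symm hyy]),
              Finset.card_singleton]
          have := Finset.card_le_card hsub
          rw [hc3, card_neighborFinset_eq_degree] at this
          have := hdeg u
          omega
        refine ⟨G.incidenceFinset y, ?_, ?_⟩
        · rw [card_incidenceFinset_eq_degree]; exact hdeg y
        · intro f hf hnf
          obtain ⟨y₂, hy₂1, hy₂2, hy₂f⟩ := key f hf hnf
          rw [huniq y₂ hy₂1 hy₂2] at hy₂f
          rw [mem_incidenceFinset]
          exact ⟨hf, hy₂f⟩
      · refine ⟨∅, by simp, fun f hf hnf => absurd ?_ hex⟩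
        obtain ⟨y, h1, h2, _⟩ := key f hf hnf
        exact ⟨y, h1, h2⟩
    -- choose a color for e
    have hA : (L e \ forb.image φ').Nonempty := by
      rw [← Finset.card_pos]
      have h1 := Finset.le_card_sdiff (forb.image φ') (L e)
      have h2 := Finset.card_image_le (s := forb) (f := φ')
      have h3 := hL e he
      omega
    obtain ⟨c, hc⟩ := hA
    rw [Finset.mem_sdiff] at hc
    refine ⟨fun f => if f = e then c else φ' f, ?_, ?_⟩
    · intro f hf
      by_cases hfe : f = e
      · simp only [hfe, if_pos rfl]; exact hc.1
      · simp only [if_neg hfe]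
        exact hmem' f (hES ▸ ⟨hf, hfe⟩)
    · intro f1 hf1 f2 hf2 hnear
      by_cases h1 : f1 = e <;> by_cases h2 : f2 = e
      · exact absurd (h1.trans h2.symm) hnear.1
      · simp only [h1, if_pos rfl, if_neg h2]
        intro hcc
        exact hc.2 (Finset.mem_image.mpr ⟨f2, hforb f2 hf2 (h1 ▸ hnear), hcc.symm⟩)
      · simp only [h2, if_pos rfl, if_neg h1]
        intro hcc
        exact hc.2 (Finset.mem_image.mpr ⟨f1, hforb f1 hf1 (h2 ▸ hnear.symm'), hcc⟩)
      · simp only [if_neg h1, if_neg h2]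
        have hf1' : f1 ∈ G'.edgeSet := hES ▸ ⟨hf1, h1⟩
        have hf2' : f2 ∈ G'.edgeSet := hES ▸ ⟨hf2, h2⟩
        refine hprop' f1 hf1' f2 hf2' ⟨hnear.1, ?_⟩
        rcases hnear.2 with hsh | ⟨g, hg, hag, hgf⟩
        · exact Or.inl hsh
        · by_cases hge : g = e
          · subst hge
            obtain ⟨y1, -, -, hf1eq⟩ := hshare f1 hf1 h1
              (by obtain ⟨w, hw1, hw2⟩ := hag.2; exact ⟨w, hw2, hw1⟩)
            obtain ⟨y2, -, -, hf2eq⟩ := hshare f2 hf2 h2 hgf.2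
            exact Or.inl ⟨u, by rw [hf1eq]; exact Sym2.mem_mk_left _ _,
              by rw [hf2eq]; exact Sym2.mem_mk_left _ _⟩
          · exact Or.inr ⟨g, hES ▸ ⟨hg, hge⟩, hag, hgf⟩

lemma star_of_near {V : Type*} {G : SimpleGraph V} (hac : G.IsAcyclic) {φ : Sym2 V → ℕ}
    (h : ∀ e ∈ G.edgeSet, ∀ f ∈ G.edgeSet, Near G e f → φ e ≠ φ f) :
    IsStarEdgeColoring G φ := by
  refine ⟨fun e1 he1 e2 he2 ha => h e1 he1 e2 he2 ⟨ha.1, Or.inl ha.2⟩, ?_,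
    fun u p hc _ => absurd hc (hac p)⟩
  intro a b p hp hlen
  cases p with
  | nil => simp at hlen
  | cons h1 p => cases p with
    | nil => simp at hlen
    | cons h2 p => cases p with
      | nil => simp at hlen
      | cons h3 p => cases p with
        | nil => simp at hlen
        | cons h4 q =>
          cases q with
          | cons h5 q' => simp [Walk.length_cons] at hlen
          | nil =>
            rename_i x1 x2 x3
            -- h1 : G.Adj a x1, h2 : G.Adj x1 x2, h3 : G.Adj x2 x3, h4 : G.Adj x3 b
            have hsn := hp.support_nodup
            simp only [Walk.support_cons, Walk.support_nil, List.nodup_cons,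
              List.mem_cons, List.mem_singleton, List.not_mem_nil] at hsn
            push_neg at hsn
            obtain ⟨⟨hax1, hax2, hax3, hab⟩, ⟨hx12, hx13, hx1b⟩, ⟨hx23, hx2b⟩, hx3b, -⟩ := hsn
            have he1 : s(a, x1) ∈ G.edgeSet := G.mem_edgeSet.mpr h1
            have he2 : s(x1, x2) ∈ G.edgeSet := G.mem_edgeSet.mpr h2
            have he3 : s(x2, x3) ∈ G.edgeSet := G.mem_edgeSet.mpr h3
            have hne12 : s(a, x1) ≠ s(x1, x2) := by
              rw [Ne, Sym2.eq_iff]; push_neg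
              exact ⟨fun h => absurd h hax1, fun h => absurd h hax2⟩
            have hne23 : s(x1, x2) ≠ s(x2, x3) := by
              rw [Ne, Sym2.eq_iff]; push_neg
              exact ⟨fun h => absurd h hx12, fun h => absurd h hx13⟩
            have hne13 : s(a, x1) ≠ s(x2, x3) := by
              rw [Ne, Sym2.eq_iff]; push_neg
              exact ⟨fun h => absurd h hax2, fun h => absurd h hax3⟩
            have d12 := h _ he1 _ he2 ⟨hne12, Or.inl ⟨x1, by simp, by simp⟩⟩
            have d23 := h _ he2 _ he3 ⟨hne23, Or.inl ⟨x2, by simp, by simp⟩⟩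
            have d13 := h _ he1 _ he3 ⟨hne13, Or.inr ⟨s(x1, x2), he2,
              ⟨hne12, x1, by simp, by simp⟩, ⟨hne23, x2, by simp, by simp⟩⟩⟩
            rintro ⟨c1, c2, hc⟩
            have m1 := hc s(a, x1) (by simp [Walk.edges_cons])
            have m2 := hc s(x1, x2) (by simp [Walk.edges_cons])
            have m3 := hc s(x2, x3) (by simp [Walk.edges_cons])
            rcases m1 with hm1 | hm1 <;> rcases m2 with hm2 | hm2 <;>
              rcases m3 with hm3 | hm3 <;> simp_all

lemma star_of_small {V : Type*} [Fintype V] {G : SimpleGraph V}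
    (hsmall : G.edgeFinset.card ≤ 3) (hac : G.IsAcyclic) {φ : Sym2 V → ℕ}
    (hprop : ∀ e₁ ∈ G.edgeSet, ∀ e₂ ∈ G.edgeSet, EdgeAdj e₁ e₂ → φ e₁ ≠ φ e₂) :
    IsStarEdgeColoring G φ := by
  refine ⟨hprop, ?_, fun u p hc _ => absurd hc (hac p)⟩
  intro a b p hp hlen _
  have hsub : p.edges.toFinset ⊆ G.edgeFinset := by
    intro f hf
    rw [List.mem_toFinset] at hf
    exact mem_edgeFinset.mpr (p.edges_subset_edgeSet hf)
  have hcard : p.edges.toFinset.card = 4 := by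
    rw [List.toFinset_card_of_nodup hp.edges_nodup, p.length_edges, hlen]
  have := Finset.card_le_card hsub
  omega

theorem stmt_14 {V : Type*} [Fintype V] (P : SimpleGraph V) (hP : P.IsTree)
    (hΔ : P.maxDegree ≤ 2) (hE : P.edgeSet.Nonempty) :
    listStarChromaticIndex P ≤ (oreDegree P + P.maxDegree) / 2 := by
  classical
  have hac := hP.IsAcyclic
  have hconn := hP.isConnected
  have hdeg : ∀ v, P.degree v ≤ 2 := fun v => le_trans (P.degree_le_maxDegree v) hΔ
  have hcardV : P.edgeFinset.card + 1 = Fintype.card V := hP.card_edgeFinset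
  obtain ⟨e₁, he₁⟩ := hE
  have he₁F : e₁ ∈ P.edgeFinset := mem_edgeFinset.mpr he₁
  have hm1 : 1 ≤ P.edgeFinset.card := Finset.card_pos.mpr ⟨e₁, he₁F⟩
  obtain ⟨a, b, hab⟩ : ∃ a b, P.Adj a b := by
    induction e₁ using Sym2.ind with
    | _ x y => exact ⟨x, y, P.mem_edgeSet.mp he₁⟩
  have hdegpos : ∀ {x y : V}, P.Adj x y → 1 ≤ P.degree x := by
    intro x y h
    rw [← card_neighborFinset_eq_degree]
    exact Finset.card_pos.mpr ⟨y, by rw [mem_neighborFinset]; exact h⟩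
  have hΔ1 : 1 ≤ P.maxDegree := le_trans (hdegpos hab) (P.degree_le_maxDegree a)
  have hore : ∀ x y, P.Adj x y → P.degree x + P.degree y ≤ oreDegree P := by
    intro x y h
    refine le_csSup ⟨2 * P.maxDegree, ?_⟩ ⟨x, y, h, rfl⟩
    rintro n ⟨x', y', h', rfl⟩
    have := P.degree_le_maxDegree x'
    have := P.degree_le_maxDegree y'
    omega
  have hnb1 : ∀ {x y z : V}, P.degree x ≤ 1 → P.Adj x y → P.Adj x z → z = y := by
    intro x y z h1 hy hz
    rw [← card_neighborFinset_eq_degree] at h1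
    exact Finset.card_le_one.mp h1 z (by rw [mem_neighborFinset]; exact hz)
      y (by rw [mem_neighborFinset]; exact hy)
  have hdeg2 : 2 ≤ P.edgeFinset.card → ∃ x y, P.Adj x y ∧ 2 ≤ P.degree x := by
    intro hm2
    by_contra hno
    push_neg at hno
    have hda : P.degree a ≤ 1 := by have := hno a b hab; omega
    have hdb : P.degree b ≤ 1 := by have := hno b a hab.symm; omega
    have hcl : ∀ w ∈ ({a, b} : Set V), ∀ z, P.Adj w z → z ∈ ({a, b} : Set V) := by
      rintro w (rfl | rfl) z hz
      · rw [hnb1 hda hab hz]; exact Or.inr rfl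
      · rw [hnb1 hdb hab.symm hz]; exact Or.inl rfl
    have hV : ∀ w : V, w ∈ ({a, b} : Set V) := by
      intro w
      obtain ⟨p⟩ := hconn.preconnected a w
      exact reach_closed _ hcl p (Or.inl rfl)
    have hVc : Fintype.card V ≤ 2 := by
      calc Fintype.card V = Finset.univ.card := rfl
      _ ≤ ({a, b} : Finset V).card := Finset.card_le_card (fun w _ => by
          rcases hV w with rfl | rfl <;> simp)
      _ ≤ 2 := (Finset.card_insert_le _ _).trans (by simp)
    omega
  rcases lt_or_ge P.edgeFinset.card 2 with hm | hm2
  · -- exactly one edge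
    have hmeq : P.edgeFinset.card = 1 := le_antisymm (by omega) hm1
    obtain ⟨f0, hf0⟩ := Finset.card_eq_one.mp hmeq
    have huniq : ∀ f ∈ P.edgeSet, f = f0 := fun f hf =>
      Finset.mem_singleton.mp (hf0 ▸ mem_edgeFinset.mpr hf)
    have hSC : StarChoosable P 1 := by
      intro L hLc
      refine ⟨fun f => if h : (L f).Nonempty then h.choose else 0, ?_, ?_⟩
      · intro f hf
        have hne : (L f).Nonempty := Finset.card_pos.mp (by have := hLc f hf; omega)
        simp only [dif_pos hne]
        exact hne.choose_spec
      · refine star_of_small (by omega) hac ?_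
        intro f1 hf1 f2 hf2 hadj
        exact absurd ((huniq f1 hf1).trans (huniq f2 hf2).symm) hadj.1
    have h2 : 2 ≤ oreDegree P :=
      le_trans (by have := hdegpos hab; have := hdegpos hab.symm; omega) (hore a b hab)
    calc listStarChromaticIndex P ≤ 1 := Nat.sInf_le hSC
      _ ≤ (oreDegree P + P.maxDegree) / 2 := by omega
  rcases lt_or_ge P.edgeFinset.card 3 with hm | hm3
  · -- exactly two edges
    have hmeq : P.edgeFinset.card = 2 := le_antisymm (by omega) hm2
    obtain ⟨f1, f2, hf12, hfs⟩ := Finset.card_eq_two.mp hmeq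
    have hmemE : ∀ f ∈ P.edgeSet, f = f1 ∨ f = f2 := by
      intro f hf
      have : f ∈ ({f1, f2} : Finset (Sym2 V)) := hfs ▸ mem_edgeFinset.mpr hf
      simpa using this
    have hf1E : f1 ∈ P.edgeSet :=
      mem_edgeFinset.mp (by rw [hfs]; simp)
    have hf2E : f2 ∈ P.edgeSet :=
      mem_edgeFinset.mp (by rw [hfs]; simp)
    have hSC : StarChoosable P 2 := by
      intro L hLc
      have h1 : (L f1).Nonempty := Finset.card_pos.mp (by have := hLc f1 hf1E; omega)
      obtain ⟨c1, hc1⟩ := h1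
      have h2 : (L f2 \ {c1}).Nonempty := by
        rw [← Finset.card_pos]
        have hs := Finset.le_card_sdiff ({c1} : Finset ℕ) (L f2)
        have := hLc f2 hf2E
        simp only [Finset.card_singleton] at hs
        omega
      obtain ⟨c2, hc2⟩ := h2
      rw [Finset.mem_sdiff, Finset.mem_singleton] at hc2
      refine ⟨fun f => if f = f1 then c1 else c2, ?_, ?_⟩
      · intro f hf
        rcases hmemE f hf with rfl | rfl
        · simp [hc1]
        · simp only [if_neg (Ne.symm hf12)]; exact hc2.1
      · refine star_of_small (by omega) hac ?_
        intro g1 hg1 g2 hg2 hadj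
        rcases hmemE g1 hg1 with rfl | rfl <;> rcases hmemE g2 hg2 with rfl | rfl
        · exact absurd rfl hadj.1
        · rw [if_pos rfl, if_neg (Ne.symm hf12)]
          exact fun h => hc2.2 h.symm
        · rw [if_pos rfl, if_neg (Ne.symm hf12)]
          exact hc2.2
        · exact absurd rfl hadj.1
    obtain ⟨x, y, hxy, hdx⟩ := hdeg2 (by omega)
    have h3 : 3 ≤ oreDegree P := le_trans (by have := hdegpos hxy.symm; omega) (hore x y hxy)
    calc listStarChromaticIndex P ≤ 2 := Nat.sInf_le hSC
      _ ≤ (oreDegree P + P.maxDegree) / 2 := by omega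
  · -- at least three edges
    obtain ⟨x, y0, hxy0, hdx⟩ := hdeg2 (by omega)
    have hdx2 : P.degree x = 2 := le_antisymm (hdeg x) hdx
    obtain ⟨y, z, hyz, hnbx⟩ := Finset.card_eq_two.mp
      (show (P.neighborFinset x).card = 2 by
        rw [card_neighborFinset_eq_degree]; exact hdx2)
    have hxy : P.Adj x y := by
      have : y ∈ P.neighborFinset x := by rw [hnbx]; simp
      rwa [mem_neighborFinset] at this
    have hxz : P.Adj x z := by
      have : z ∈ P.neighborFinset x := by rw [hnbx]; simp
      rwa [mem_neighborFinset] at this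
    have hpair : ∃ p q, P.Adj p q ∧ 2 ≤ P.degree p ∧ 2 ≤ P.degree q := by
      rcases le_or_gt 2 (P.degree y) with h | h
      · exact ⟨x, y, hxy, hdx, h⟩
      rcases le_or_gt 2 (P.degree z) with h' | h'
      · exact ⟨x, z, hxz, hdx, h'⟩
      exfalso
      have hdy : P.degree y ≤ 1 := by omega
      have hdz : P.degree z ≤ 1 := by omega
      have hcl : ∀ w ∈ ({x, y, z} : Set V), ∀ t, P.Adj w t → t ∈ ({x, y, z} : Set V) := by
        rintro w (rfl | rfl | rfl) t ht
        · have hmem : t ∈ P.neighborFinset w := by rw [mem_neighborFinset]; exact ht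
          rw [hnbx] at hmem
          simp only [Finset.mem_insert, Finset.mem_singleton] at hmem
          rcases hmem with rfl | rfl
          · exact Or.inr (Or.inl rfl)
          · exact Or.inr (Or.inr rfl)
        · rw [hnb1 hdy hxy.symm ht]; exact Or.inl rfl
        · rw [hnb1 hdz hxz.symm ht]; exact Or.inl rfl
      have hV : ∀ w : V, w ∈ ({x, y, z} : Set V) := fun w => by
        obtain ⟨p⟩ := hconn.preconnected x w
        exact reach_closed _ hcl p (Or.inl rfl)
      have hVc : Fintype.card V ≤ 3 := by
        calc Fintype.card V = Finset.univ.card := rfl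
        _ ≤ ({x, y, z} : Finset V).card := Finset.card_le_card (fun w _ => by
            rcases hV w with rfl | rfl | rfl <;> simp)
        _ ≤ 3 := by
          have h1 := Finset.card_insert_le x ({y, z} : Finset V)
          have h2 := Finset.card_insert_le y ({z} : Finset V)
          simp only [Finset.card_singleton] at h2
          omega
      omega
    obtain ⟨p, q, hpq, hdp, hdq⟩ := hpair
    have h4 : 4 ≤ oreDegree P := le_trans (by omega) (hore p q hpq)
    have hΔ2 : 2 ≤ P.maxDegree := le_trans hdp (P.degree_le_maxDegree p)
    have hSC : StarChoosable P 3 := by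
      intro L hLc
      obtain ⟨φ, hmem, hprop⟩ := greedy_s14 P.edgeFinset.card P rfl hac hdeg L hLc
      exact ⟨φ, hmem, star_of_near hac hprop⟩
    calc listStarChromaticIndex P ≤ 3 := Nat.sInf_le hSC
      _ ≤ (oreDegree P + P.maxDegree) / 2 := by omega
end
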